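/- arXiv:2109.12015 — 4 statements merged into one kernel-verified Lean document; each statement's English description precedes it below -/
import Mathlib

section
/- Let $d\ge1$, $s_1,s_2\in\mathbb{R}$, $0<p_1<p_2<\infty$, $0<q_1\le q_2\le\infty$ with $q_1=\frac{p_1}{p_2}q_2$ (or more generally $q_1\le\frac{p_1}{p_2}q_2$), $\tau_1=1/p_1$, $\tau_2=1/p_2$, and $s_1=s_2$. Then for every sequence $t$ supported in a fixed dyadic cube $\tilde Q_0$, $\|t\mid\tilde b^{s_2,1/p_2}_{p_2,q_2}(\tilde Q_0)\|\le \|t\mid\tilde b^{s_1,1/p_1}_{p_1,q_1}(\tilde Q_0)\|$. -/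
open MeasureTheory ENNReal

noncomputable section

attribute [local instance] Classical.propDecidable

/-- The dyadic cube `Q_{j,k} = 2^{-j}([0,1)^d + k)` in `ℝ^d`. -/
def dyadicCube (d : ℕ) (j : ℤ) (k : Fin d → ℤ) : Set (Fin d → ℝ) :=
  {x | ∀ i, (2:ℝ) ^ (-j) * (k i) ≤ x i ∧ x i < (2:ℝ) ^ (-j) * (k i + 1)}

/-- The `ℓ_p`-sum `(∑_{m : Q_{j,m} ⊆ Q_{jP,k}} |u m|^p)^{1/p}` (sup for `p = ∞`). -/
def cubeLpNorm (d : ℕ) (p : ℝ≥0∞) (jP : ℤ) (k : Fin d → ℤ) (j : ℕ)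
    (u : (Fin d → ℤ) → ℂ) : ℝ≥0∞ :=
  if p = ∞ then
    ⨆ m ∈ {m : Fin d → ℤ | dyadicCube d (j : ℤ) m ⊆ dyadicCube d jP k}, (‖u m‖₊ : ℝ≥0∞)
  else
    (∑' m : Fin d → ℤ,
        if dyadicCube d (j : ℤ) m ⊆ dyadicCube d jP k then (‖u m‖₊ : ℝ≥0∞) ^ p.toReal
        else 0) ^ (1 / p.toReal)

/-- The sequence space quasi-norm `‖t ∣ b̃^{s,τ}_{p,q}(Q_{J0,K0})‖`:
`sup_{P ⊆ Q_{J0,K0}} |P|^{-τ} (∑_{j ≥ max{j_P,0}} 2^{j(s+d/2-d/p)q}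
   ∑_i [∑_{m : Q_{j,m} ⊆ P} |t_{i,j,m}|^p]^{q/p})^{1/q}`. -/
def seqNorm (d : ℕ) (s τ : ℝ) (p q : ℝ≥0∞) (J0 : ℤ) (K0 : Fin d → ℤ)
    (t : Fin (2 ^ d - 1) → ℕ → (Fin d → ℤ) → ℂ) : ℝ≥0∞ :=
  ⨆ (jP : ℤ) (k : Fin d → ℤ) (_ : dyadicCube d jP k ⊆ dyadicCube d J0 K0),
    (2 : ℝ≥0∞) ^ ((jP : ℝ) * d * τ) *
      (if q = ∞ then
        ⨆ (j : ℕ) (_ : jP ≤ (j : ℤ)) (i : Fin (2 ^ d - 1)),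
          (2 : ℝ≥0∞) ^ ((j : ℝ) * (s + d / 2 - d / p.toReal)) * cubeLpNorm d p jP k j (t i j)
      else
        (∑' j : ℕ,
            if jP ≤ (j : ℤ) then
              ∑ i : Fin (2 ^ d - 1),
                ((2 : ℝ≥0∞) ^ ((j : ℝ) * (s + d / 2 - d / p.toReal)) *
                    cubeLpNorm d p jP k j (t i j)) ^ q.toReal
            else 0) ^ (1 / q.toReal))

/-- `t` is supported in cubes contained in `Q_{J0,K0}`. -/
def SupportedIn (d : ℕ) (J0 : ℤ) (K0 : Fin d → ℤ)
    (t : Fin (2 ^ d - 1) → ℕ → (Fin d → ℤ) → ℂ) : Prop :=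
  ∀ i (j : ℕ) m, ¬ dyadicCube d (j : ℤ) m ⊆ dyadicCube d J0 K0 → t i j m = 0


/- ===== auxiliary lemmas ===== -/

lemma rpow_cancel {x y : ℝ≥0∞} {r : ℝ} (hr : 0 < r) (h : x ^ r ≤ y ^ r) : x ≤ y := by
  have h2 := ENNReal.rpow_le_rpow h (le_of_lt (one_div_pos.mpr hr))
  rwa [← ENNReal.rpow_mul, ← ENNReal.rpow_mul, mul_one_div_cancel hr.ne',
    ENNReal.rpow_one, ENNReal.rpow_one] at h2

lemma pow_tsum_ite {ι : Type*} (C : ℝ≥0∞) {r : ℝ} (hr : 0 < r)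
    (cond : ι → Prop) (f : ι → ℝ≥0∞) :
    (C * (∑' m, if cond m then f m ^ r else 0) ^ (1 / r)) ^ r
      = ∑' m, if cond m then (C * f m) ^ r else 0 := by
  rw [ENNReal.mul_rpow_of_nonneg _ _ hr.le, ← ENNReal.rpow_mul,
    one_div, inv_mul_cancel₀ hr.ne', ENNReal.rpow_one, ← ENNReal.tsum_mul_left]
  refine tsum_congr fun m => ?_
  by_cases h : cond m
  · rw [if_pos h, if_pos h, ENNReal.mul_rpow_of_nonneg _ _ hr.le]
  · rw [if_neg h, if_neg h, mul_zero]

lemma pow_tsum_guard {γ : Type*} [Fintype γ] (C : ℝ≥0∞) {r : ℝ} (hr : 0 < r)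
    (jP : ℤ) (g : ℕ → γ → ℝ≥0∞) :
    (C * (∑' j : ℕ, if jP ≤ (j : ℤ) then ∑ i, g j i ^ r else 0) ^ (1 / r)) ^ r
      = ∑' j : ℕ, if jP ≤ (j : ℤ) then ∑ i, (C * g j i) ^ r else 0 := by
  rw [ENNReal.mul_rpow_of_nonneg _ _ hr.le, ← ENNReal.rpow_mul,
    one_div, inv_mul_cancel₀ hr.ne', ENNReal.rpow_one, ← ENNReal.tsum_mul_left]
  refine tsum_congr fun j => ?_
  by_cases h : jP ≤ (j : ℤ)
  · rw [if_pos h, if_pos h, Finset.mul_sum]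
    exact Finset.sum_congr rfl fun i _ => by
      rw [ENNReal.mul_rpow_of_nonneg _ _ hr.le]
  · rw [if_neg h, if_neg h, mul_zero]

lemma le_tsum_ite {ι : Type*} {r : ℝ} (hr : 0 < r) (cond : ι → Prop) (f : ι → ℝ≥0∞)
    {m : ι} (hm : cond m) :
    f m ≤ (∑' m' : ι, if cond m' then f m' ^ r else 0) ^ (1 / r) := by
  have h1 : f m ^ r ≤ ∑' m' : ι, if cond m' then f m' ^ r else 0 := by
    refine le_trans ?_ (ENNReal.le_tsum m)
    rw [if_pos hm]
  calc f m = (f m ^ r) ^ (1 / r) := by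
        rw [← ENNReal.rpow_mul, mul_one_div_cancel hr.ne', ENNReal.rpow_one]
    _ ≤ _ := ENNReal.rpow_le_rpow h1 (le_of_lt (one_div_pos.mpr hr))

lemma le_tsum_guard {γ : Type*} [Fintype γ] {r : ℝ} (hr : 0 < r)
    (jP : ℤ) (g : ℕ → γ → ℝ≥0∞) {j : ℕ} (hj : jP ≤ (j : ℤ)) (i : γ) :
    g j i ≤ (∑' j' : ℕ, if jP ≤ (j' : ℤ) then ∑ i', g j' i' ^ r else 0) ^ (1 / r) := by
  have h1 : g j i ^ r ≤ ∑' j' : ℕ, if jP ≤ (j' : ℤ) then ∑ i', g j' i' ^ r else 0 := by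
    refine le_trans ?_ (ENNReal.le_tsum j)
    rw [if_pos hj]
    exact Finset.single_le_sum (f := fun i' => g j i' ^ r) (fun _ _ => zero_le) (Finset.mem_univ i)
  calc g j i = (g j i ^ r) ^ (1 / r) := by
        rw [← ENNReal.rpow_mul, mul_one_div_cancel hr.ne', ENNReal.rpow_one]
    _ ≤ _ := ENNReal.rpow_le_rpow h1 (le_of_lt (one_div_pos.mpr hr))

lemma scaled_pow (d : ℕ) (s : ℝ) (c : ℝ≥0∞) (jP : ℤ) (k : Fin d → ℤ) (j : ℕ)
    (u : (Fin d → ℤ) → ℂ) {p : ℝ≥0∞} (hpt : p ≠ ∞) (hpr : 0 < p.toReal) :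
    (c * ((2 : ℝ≥0∞) ^ ((jP : ℝ) * d * (p⁻¹).toReal) *
        ((2 : ℝ≥0∞) ^ ((j : ℝ) * (s + (d : ℝ) / 2 - (d : ℝ) / p.toReal)) *
          cubeLpNorm d p jP k j u))) ^ p.toReal
    = ∑' m : Fin d → ℤ, if dyadicCube d (j : ℤ) m ⊆ dyadicCube d jP k then
        (2 : ℝ≥0∞) ^ (((jP : ℝ) - (j : ℝ)) * d) *
          (c * ((2 : ℝ≥0∞) ^ ((j : ℝ) * (s + (d : ℝ) / 2)) * (‖u m‖₊ : ℝ≥0∞))) ^ p.toReal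
      else 0 := by
  have h2 : (2 : ℝ≥0∞) ≠ 0 := two_ne_zero
  have h2t : (2 : ℝ≥0∞) ≠ ∞ := ENNReal.ofNat_ne_top
  rw [ENNReal.toReal_inv, cubeLpNorm, if_neg hpt, ← mul_assoc, ← mul_assoc]
  refine (pow_tsum_ite _ hpr _ _).trans (tsum_congr fun m => ?_)
  by_cases hm : dyadicCube d (j : ℤ) m ⊆ dyadicCube d jP k
  · rw [if_pos hm, if_pos hm]
    have e1 : c * (2 : ℝ≥0∞) ^ ((jP : ℝ) * d * (p.toReal)⁻¹) *
          (2 : ℝ≥0∞) ^ ((j : ℝ) * (s + (d : ℝ) / 2 - (d : ℝ) / p.toReal)) * (‖u m‖₊ : ℝ≥0∞)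
        = (2 : ℝ≥0∞) ^ ((((jP : ℝ) - (j : ℝ)) * d) / p.toReal) *
            (c * ((2 : ℝ≥0∞) ^ ((j : ℝ) * (s + (d : ℝ) / 2)) * (‖u m‖₊ : ℝ≥0∞))) := by
      rw [mul_assoc c, ← ENNReal.rpow_add _ _ h2 h2t,
        show (jP : ℝ) * d * (p.toReal)⁻¹ + (j : ℝ) * (s + (d : ℝ) / 2 - (d : ℝ) / p.toReal)
          = (((jP : ℝ) - (j : ℝ)) * d) / p.toReal + (j : ℝ) * (s + (d : ℝ) / 2) from by ring,
        ENNReal.rpow_add _ _ h2 h2t]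
      ring
    rw [e1, ENNReal.mul_rpow_of_nonneg _ _ hpr.le, ← ENNReal.rpow_mul,
      div_mul_cancel₀ _ hpr.ne']
  · rw [if_neg hm, if_neg hm]

/-- Substep 1.3 of the limiting embedding theorem: let `0 < p₁ < p₂ < ∞`,
`0 < q₁ ≤ q₂ ≤ ∞` with `q₁ ≤ (p₁/p₂) q₂`, `τ₁ = 1/p₁`, `τ₂ = 1/p₂` and `s₁ = s₂ = s`.
Then for every sequence `t` supported in a fixed dyadic cube `Q̃₀`,
`‖t ∣ b̃^{s,1/p₂}_{p₂,q₂}(Q̃₀)‖ ≤ ‖t ∣ b̃^{s,1/p₁}_{p₁,q₁}(Q̃₀)‖`. -/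
theorem statement9 (d : ℕ) (hd : 1 ≤ d) (s : ℝ) (p1 p2 q1 q2 : ℝ≥0∞)
    (hp1 : 0 < p1) (hp12 : p1 < p2) (hp2 : p2 < ∞) (hq1 : 0 < q1) (hq12 : q1 ≤ q2)
    (hq : q1 ≤ (p1 / p2) * q2) (J0 : ℤ) (K0 : Fin d → ℤ)
    (t : Fin (2 ^ d - 1) → ℕ → (Fin d → ℤ) → ℂ) (ht : SupportedIn d J0 K0 t) :
    seqNorm d s (p2⁻¹).toReal p2 q2 J0 K0 t ≤ seqNorm d s (p1⁻¹).toReal p1 q1 J0 K0 t := by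
  have h2 : (2 : ℝ≥0∞) ≠ 0 := two_ne_zero
  have h2t : (2 : ℝ≥0∞) ≠ ∞ := ENNReal.ofNat_ne_top
  have hp1t : p1 ≠ ∞ := (hp12.trans hp2).ne
  have hp2t : p2 ≠ ∞ := hp2.ne
  have hpr1 : 0 < p1.toReal := ENNReal.toReal_pos hp1.ne' hp1t
  have hpr2 : 0 < p2.toReal := ENNReal.toReal_pos (hp1.trans hp12).ne' hp2t
  have hpr12 : p1.toReal < p2.toReal := (ENNReal.toReal_lt_toReal hp1t hp2t).mpr hp12
  set N1 := seqNorm d s (p1⁻¹).toReal p1 q1 J0 K0 t with hN1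
  -- the b1 norm of any admissible cube P is at most N1
  have hA1 : ∀ (jP : ℤ) (k : Fin d → ℤ), dyadicCube d jP k ⊆ dyadicCube d J0 K0 →
      (2 : ℝ≥0∞) ^ ((jP : ℝ) * d * (p1⁻¹).toReal) *
        (if q1 = ∞ then
          ⨆ (j : ℕ) (_ : jP ≤ (j : ℤ)) (i : Fin (2 ^ d - 1)),
            (2 : ℝ≥0∞) ^ ((j : ℝ) * (s + d / 2 - d / p1.toReal)) * cubeLpNorm d p1 jP k j (t i j)
        else
          (∑' j : ℕ,
              if jP ≤ (j : ℤ) then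
                ∑ i : Fin (2 ^ d - 1),
                  ((2 : ℝ≥0∞) ^ ((j : ℝ) * (s + d / 2 - d / p1.toReal)) *
                      cubeLpNorm d p1 jP k j (t i j)) ^ q1.toReal
              else 0) ^ (1 / q1.toReal)) ≤ N1 := by
    intro jP k hsub
    rw [hN1]
    unfold seqNorm
    exact le_iSup_of_le jP (le_iSup_of_le k (le_iSup_of_le hsub le_rfl))
  -- the single (j,i) term of the b1 norm is at most N1
  have hu : ∀ (jP : ℤ) (k : Fin d → ℤ), dyadicCube d jP k ⊆ dyadicCube d J0 K0 →
      ∀ (j : ℕ), jP ≤ (j : ℤ) → ∀ i : Fin (2 ^ d - 1),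
      (2 : ℝ≥0∞) ^ ((jP : ℝ) * d * (p1⁻¹).toReal) *
        ((2 : ℝ≥0∞) ^ ((j : ℝ) * (s + d / 2 - d / p1.toReal)) *
          cubeLpNorm d p1 jP k j (t i j)) ≤ N1 := by
    intro jP k hsub j hj i
    refine le_trans (mul_le_mul_right ?_ _) (hA1 jP k hsub)
    by_cases hq1t : q1 = ∞
    · rw [if_pos hq1t]
      exact le_iSup_of_le j (le_iSup_of_le hj (le_iSup_of_le i le_rfl))
    · rw [if_neg hq1t]
      have hq1r : 0 < q1.toReal := ENNReal.toReal_pos hq1.ne' hq1t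
      exact le_tsum_guard hq1r jP
        (fun j' i' => (2 : ℝ≥0∞) ^ ((j' : ℝ) * (s + d / 2 - d / p1.toReal)) *
          cubeLpNorm d p1 jP k j' (t i' j')) hj i
  -- pointwise bound: 2^{j(s+d/2)} |t i j m| ≤ N1
  have hB' : ∀ (i : Fin (2 ^ d - 1)) (j : ℕ) (m : Fin d → ℤ),
      (2 : ℝ≥0∞) ^ ((j : ℝ) * (s + (d : ℝ) / 2)) * (‖t i j m‖₊ : ℝ≥0∞) ≤ N1 := by
    intro i j m
    by_cases hsub : dyadicCube d (j : ℤ) m ⊆ dyadicCube d J0 K0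
    · refine le_trans ?_ (hu (j : ℤ) m hsub j le_rfl i)
      rw [ENNReal.toReal_inv, ← mul_assoc, ← ENNReal.rpow_add _ _ h2 h2t,
        show (((j : ℤ) : ℝ)) * d * (p1.toReal)⁻¹ + (j : ℝ) * (s + (d : ℝ) / 2 - (d : ℝ) / p1.toReal)
          = (j : ℝ) * (s + (d : ℝ) / 2) from by push_cast; ring]
      refine mul_le_mul_right ?_ _
      rw [cubeLpNorm, if_neg hp1t]
      exact le_tsum_ite hpr1 _ (fun m' => (‖t i j m'‖₊ : ℝ≥0∞)) (subset_refl _)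
    · rw [ht i j m hsub]
      simp
  -- trivial case N1 = ∞
  by_cases hNt : N1 = ∞
  · exact hNt ▸ le_top
  -- degenerate case N1 = 0
  by_cases hN0 : N1 = 0
  · have ht0 : ∀ (i : Fin (2 ^ d - 1)) (j : ℕ) (m : Fin d → ℤ), t i j m = 0 := by
      intro i j m
      have h := hB' i j m
      rw [hN0, le_zero_iff, mul_eq_zero] at h
      rcases h with h | h
      · exact absurd h (ENNReal.rpow_pos zero_lt_two h2t).ne'
      · simpa using h
    have hLp : ∀ (jP : ℤ) (k : Fin d → ℤ) (j : ℕ) (i : Fin (2 ^ d - 1)),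
        cubeLpNorm d p2 jP k j (t i j) = 0 := by
      intro jP k j i
      rw [cubeLpNorm, if_neg hp2t]
      have hz : ∀ m : Fin d → ℤ,
          (if dyadicCube d (j : ℤ) m ⊆ dyadicCube d jP k then
            ((‖t i j m‖₊ : ℝ≥0∞)) ^ p2.toReal else 0) = 0 := by
        intro m
        rw [ht0 i j m]
        simp [ENNReal.zero_rpow_of_pos hpr2]
      rw [tsum_congr hz, tsum_zero, ENNReal.zero_rpow_of_pos (one_div_pos.mpr hpr2)]
    unfold seqNorm
    refine iSup_le fun jP => iSup_le fun k => iSup_le fun _ => ?_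
    have hbr : (if q2 = ∞ then
          ⨆ (j : ℕ) (_ : jP ≤ (j : ℤ)) (i : Fin (2 ^ d - 1)),
            (2 : ℝ≥0∞) ^ ((j : ℝ) * (s + d / 2 - d / p2.toReal)) * cubeLpNorm d p2 jP k j (t i j)
        else
          (∑' j : ℕ,
              if jP ≤ (j : ℤ) then
                ∑ i : Fin (2 ^ d - 1),
                  ((2 : ℝ≥0∞) ^ ((j : ℝ) * (s + d / 2 - d / p2.toReal)) *
                      cubeLpNorm d p2 jP k j (t i j)) ^ q2.toReal
              else 0) ^ (1 / q2.toReal)) = 0 := by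
      by_cases hq2t : q2 = ∞
      · rw [if_pos hq2t]
        simp [hLp]
      · rw [if_neg hq2t]
        have hq2r : 0 < q2.toReal := ENNReal.toReal_pos (hq1.trans_le hq12).ne' hq2t
        have hz : ∀ j : ℕ,
            (if jP ≤ (j : ℤ) then
              ∑ i : Fin (2 ^ d - 1),
                ((2 : ℝ≥0∞) ^ ((j : ℝ) * (s + d / 2 - d / p2.toReal)) *
                    cubeLpNorm d p2 jP k j (t i j)) ^ q2.toReal
            else 0) = 0 := by
          intro j
          by_cases hj : jP ≤ (j : ℤ) <;>
            simp [hj, hLp, ENNReal.zero_rpow_of_pos hq2r]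
        rw [tsum_congr hz, tsum_zero, ENNReal.zero_rpow_of_pos (one_div_pos.mpr hq2r)]
    rw [hbr, mul_zero]
    exact zero_le
  -- main case: 0 < N1 < ∞
  set c := N1⁻¹ with hc
  have hcN : c * N1 = 1 := ENNReal.inv_mul_cancel hN0 hNt
  have hNc : N1 * c = 1 := ENNReal.mul_inv_cancel hN0 hNt
  have hNx : ∀ x : ℝ≥0∞, c * x ≤ 1 → x ≤ N1 := by
    intro x hx
    calc x = N1 * (c * x) := by rw [← mul_assoc, hNc, one_mul]
      _ ≤ N1 * 1 := mul_le_mul_right hx N1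
      _ = N1 := mul_one N1
  have ham : ∀ (i : Fin (2 ^ d - 1)) (j : ℕ) (m : Fin d → ℤ),
      c * ((2 : ℝ≥0∞) ^ ((j : ℝ) * (s + (d : ℝ) / 2)) * (‖t i j m‖₊ : ℝ≥0∞)) ≤ 1 :=
    fun i j m => le_trans (mul_le_mul_right (hB' i j m) c) hcN.le
  -- scaled comparison of p2-terms with p1-terms
  have hA : ∀ (jP : ℤ) (k : Fin d → ℤ) (j : ℕ) (i : Fin (2 ^ d - 1)),
      c * ((2 : ℝ≥0∞) ^ ((jP : ℝ) * d * (p2⁻¹).toReal) *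
        ((2 : ℝ≥0∞) ^ ((j : ℝ) * (s + d / 2 - d / p2.toReal)) * cubeLpNorm d p2 jP k j (t i j)))
      ≤ (c * ((2 : ℝ≥0∞) ^ ((jP : ℝ) * d * (p1⁻¹).toReal) *
        ((2 : ℝ≥0∞) ^ ((j : ℝ) * (s + d / 2 - d / p1.toReal)) *
          cubeLpNorm d p1 jP k j (t i j)))) ^ (p1.toReal / p2.toReal) := by
    intro jP k j i
    refine rpow_cancel hpr2 ?_
    rw [← ENNReal.rpow_mul, div_mul_cancel₀ _ hpr2.ne',
      scaled_pow d s c jP k j (t i j) hp2t hpr2,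
      scaled_pow d s c jP k j (t i j) hp1t hpr1]
    refine ENNReal.tsum_le_tsum fun m => ?_
    by_cases hm : dyadicCube d (j : ℤ) m ⊆ dyadicCube d jP k
    · rw [if_pos hm, if_pos hm]
      exact mul_le_mul_right
        (ENNReal.rpow_le_rpow_of_exponent_ge (ham i j m) hpr12.le) _
    · rw [if_neg hm, if_neg hm]
  -- now bound the b2 norm
  unfold seqNorm
  refine iSup_le fun jP => iSup_le fun k => iSup_le fun hsub => ?_
  by_cases hq2t : q2 = ∞
  · rw [if_pos hq2t, ENNReal.mul_iSup]
    refine iSup_le fun j => ?_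
    rw [ENNReal.mul_iSup]
    refine iSup_le fun hj => ?_
    rw [ENNReal.mul_iSup]
    refine iSup_le fun i => ?_
    have hcu : c * ((2 : ℝ≥0∞) ^ ((jP : ℝ) * d * (p1⁻¹).toReal) *
        ((2 : ℝ≥0∞) ^ ((j : ℝ) * (s + d / 2 - d / p1.toReal)) *
          cubeLpNorm d p1 jP k j (t i j))) ≤ 1 :=
      le_trans (mul_le_mul_right (hu jP k hsub j hj i) c) hcN.le
    have hcv : c * ((2 : ℝ≥0∞) ^ ((jP : ℝ) * d * (p2⁻¹).toReal) *
        ((2 : ℝ≥0∞) ^ ((j : ℝ) * (s + d / 2 - d / p2.toReal)) *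
          cubeLpNorm d p2 jP k j (t i j))) ≤ 1 :=
      le_trans (hA jP k j i)
        (ENNReal.rpow_le_one hcu (div_nonneg ENNReal.toReal_nonneg ENNReal.toReal_nonneg))
    exact hNx _ hcv
  · -- q2 finite (hence q1 finite)
    rw [if_neg hq2t]
    have hq2r : 0 < q2.toReal := ENNReal.toReal_pos (hq1.trans_le hq12).ne' hq2t
    have hppq : (p1 / p2) * q2 ≠ ∞ :=
      ENNReal.mul_ne_top (ENNReal.div_lt_top hp1t (hp1.trans hp12).ne').ne hq2t
    have hq1t : q1 ≠ ∞ := fun h => hppq (top_le_iff.mp (h ▸ hq))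
    have hq1r : 0 < q1.toReal := ENNReal.toReal_pos hq1.ne' hq1t
    have hqr' : q1.toReal ≤ p1.toReal / p2.toReal * q2.toReal := by
      have h := (ENNReal.toReal_le_toReal hq1t hppq).mpr hq
      rwa [ENNReal.toReal_mul, ENNReal.toReal_div] at h
    have key : c * ((2 : ℝ≥0∞) ^ ((jP : ℝ) * d * (p2⁻¹).toReal) *
        (∑' j : ℕ,
            if jP ≤ (j : ℤ) then
              ∑ i : Fin (2 ^ d - 1),
                ((2 : ℝ≥0∞) ^ ((j : ℝ) * (s + d / 2 - d / p2.toReal)) *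
                    cubeLpNorm d p2 jP k j (t i j)) ^ q2.toReal
            else 0) ^ (1 / q2.toReal)) ≤ 1 := by
      refine rpow_cancel hq2r ?_
      rw [ENNReal.one_rpow, ← mul_assoc]
      refine le_trans (le_of_eq (pow_tsum_guard _ hq2r jP _)) ?_
      have step : ∀ j : ℕ,
          (if jP ≤ (j : ℤ) then
            ∑ i : Fin (2 ^ d - 1),
              ((c * (2 : ℝ≥0∞) ^ ((jP : ℝ) * d * (p2⁻¹).toReal)) *
                ((2 : ℝ≥0∞) ^ ((j : ℝ) * (s + d / 2 - d / p2.toReal)) *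
                  cubeLpNorm d p2 jP k j (t i j))) ^ q2.toReal
          else 0)
          ≤ (if jP ≤ (j : ℤ) then
            ∑ i : Fin (2 ^ d - 1),
              ((c * (2 : ℝ≥0∞) ^ ((jP : ℝ) * d * (p1⁻¹).toReal)) *
                ((2 : ℝ≥0∞) ^ ((j : ℝ) * (s + d / 2 - d / p1.toReal)) *
                  cubeLpNorm d p1 jP k j (t i j))) ^ q1.toReal
          else 0) := by
        intro j
        by_cases hj : jP ≤ (j : ℤ)
        · rw [if_pos hj, if_pos hj]
          refine Finset.sum_le_sum fun i _ => ?_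
          have hcu : c * ((2 : ℝ≥0∞) ^ ((jP : ℝ) * d * (p1⁻¹).toReal) *
              ((2 : ℝ≥0∞) ^ ((j : ℝ) * (s + d / 2 - d / p1.toReal)) *
                cubeLpNorm d p1 jP k j (t i j))) ≤ 1 :=
            le_trans (mul_le_mul_right (hu jP k hsub j hj i) c) hcN.le
          calc ((c * (2 : ℝ≥0∞) ^ ((jP : ℝ) * d * (p2⁻¹).toReal)) *
                ((2 : ℝ≥0∞) ^ ((j : ℝ) * (s + d / 2 - d / p2.toReal)) *
                  cubeLpNorm d p2 jP k j (t i j))) ^ q2.toReal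
              = (c * ((2 : ℝ≥0∞) ^ ((jP : ℝ) * d * (p2⁻¹).toReal) *
                ((2 : ℝ≥0∞) ^ ((j : ℝ) * (s + d / 2 - d / p2.toReal)) *
                  cubeLpNorm d p2 jP k j (t i j)))) ^ q2.toReal := by rw [mul_assoc c]
            _ ≤ ((c * ((2 : ℝ≥0∞) ^ ((jP : ℝ) * d * (p1⁻¹).toReal) *
                ((2 : ℝ≥0∞) ^ ((j : ℝ) * (s + d / 2 - d / p1.toReal)) *
                  cubeLpNorm d p1 jP k j (t i j)))) ^ (p1.toReal / p2.toReal)) ^ q2.toReal :=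
                ENNReal.rpow_le_rpow (hA jP k j i) hq2r.le
            _ = (c * ((2 : ℝ≥0∞) ^ ((jP : ℝ) * d * (p1⁻¹).toReal) *
                ((2 : ℝ≥0∞) ^ ((j : ℝ) * (s + d / 2 - d / p1.toReal)) *
                  cubeLpNorm d p1 jP k j (t i j)))) ^ (p1.toReal / p2.toReal * q2.toReal) :=
                (ENNReal.rpow_mul _ _ _).symm
            _ ≤ (c * ((2 : ℝ≥0∞) ^ ((jP : ℝ) * d * (p1⁻¹).toReal) *
                ((2 : ℝ≥0∞) ^ ((j : ℝ) * (s + d / 2 - d / p1.toReal)) *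
                  cubeLpNorm d p1 jP k j (t i j)))) ^ q1.toReal :=
                ENNReal.rpow_le_rpow_of_exponent_ge hcu hqr'
            _ = ((c * (2 : ℝ≥0∞) ^ ((jP : ℝ) * d * (p1⁻¹).toReal)) *
                ((2 : ℝ≥0∞) ^ ((j : ℝ) * (s + d / 2 - d / p1.toReal)) *
                  cubeLpNorm d p1 jP k j (t i j))) ^ q1.toReal := by rw [mul_assoc c]
        · rw [if_neg hj, if_neg hj]
      refine le_trans (ENNReal.tsum_le_tsum step) ?_
      refine le_trans (le_of_eq (pow_tsum_guard
        (c * (2 : ℝ≥0∞) ^ ((jP : ℝ) * d * (p1⁻¹).toReal)) hq1r jP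
        (fun j i => (2 : ℝ≥0∞) ^ ((j : ℝ) * (s + d / 2 - d / p1.toReal)) *
          cubeLpNorm d p1 jP k j (t i j))).symm) ?_
      rw [mul_assoc c]
      have hA1' : (2 : ℝ≥0∞) ^ ((jP : ℝ) * d * (p1⁻¹).toReal) *
          (∑' j : ℕ,
              if jP ≤ (j : ℤ) then
                ∑ i : Fin (2 ^ d - 1),
                  ((2 : ℝ≥0∞) ^ ((j : ℝ) * (s + d / 2 - d / p1.toReal)) *
                      cubeLpNorm d p1 jP k j (t i j)) ^ q1.toReal
              else 0) ^ (1 / q1.toReal) ≤ N1 := by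
        have h := hA1 jP k hsub
        rwa [if_neg hq1t] at h
      calc (c * ((2 : ℝ≥0∞) ^ ((jP : ℝ) * d * (p1⁻¹).toReal) *
            (∑' j : ℕ,
                if jP ≤ (j : ℤ) then
                  ∑ i : Fin (2 ^ d - 1),
                    ((2 : ℝ≥0∞) ^ ((j : ℝ) * (s + d / 2 - d / p1.toReal)) *
                        cubeLpNorm d p1 jP k j (t i j)) ^ q1.toReal
                else 0) ^ (1 / q1.toReal))) ^ q1.toReal
          ≤ (c * N1) ^ q1.toReal := ENNReal.rpow_le_rpow (mul_le_mul_right hA1' c) hq1r.le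
        _ = 1 := by rw [hcN, ENNReal.one_rpow]
    exact hNx _ key


end
end

section
/- Let $s\in\mathbb{R}$, $\tau\ge 0$, $0<p,q\le\infty$ with either $\tau>1/p$, or $\tau=1/p$ and $q=\infty$. Then at the level of sequence spaces: $\|t\mid\tilde b^{s,\tau}_{p,q}(\tilde Q_0)\|\sim\sup_{j\ge0}2^{j(s+d(\tau-1/p)+d/2)}\sup_{i,m}|t_{i,j,m}|$, i.e. $\tilde b^{s,\tau}_{p,q}(\tilde Q_0)=\tilde b^{s+d(\tau-1/p)}_{\infty,\infty}(\tilde Q_0)$ with equivalent norms, for sequences supported in cubes inside a fixed dyadic cube $\tilde Q_0$. -/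
open MeasureTheory ENNReal

noncomputable section

attribute [local instance] Classical.propDecidable

private lemma corner_mem (d : ℕ) (j : ℤ) (m : Fin d → ℤ) :
    (fun i => (2:ℝ) ^ (-j) * (m i)) ∈ dyadicCube d j m := by
  intro i
  have h2 : (0:ℝ) < (2:ℝ) ^ (-j) := zpow_pos (by norm_num) _
  exact ⟨le_rfl, mul_lt_mul_of_pos_left (by linarith) h2⟩

private lemma mem_box_of_subset {d : ℕ} {jP : ℤ} {k : Fin d → ℤ} {j : ℕ} (hj : jP ≤ (j:ℤ))
    {m : Fin d → ℤ} (hsub : dyadicCube d (j:ℤ) m ⊆ dyadicCube d jP k) (i : Fin d) :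
    k i * 2 ^ ((j:ℤ) - jP).toNat ≤ m i ∧ m i < (k i + 1) * 2 ^ ((j:ℤ) - jP).toNat := by
  have hx := hsub (corner_mem d (j:ℤ) m) i
  set e : ℕ := ((j:ℤ) - jP).toNat with he
  have hee : (j:ℤ) - jP = (e:ℤ) := (Int.toNat_of_nonneg (by omega)).symm
  have h2j : (0:ℝ) < (2:ℝ) ^ (j:ℤ) := zpow_pos (by norm_num) _
  have key : (2:ℝ) ^ (j:ℤ) * (2:ℝ) ^ (-jP) = (2:ℝ) ^ e := by
    rw [← zpow_add₀ (two_ne_zero), show (j:ℤ) + -jP = (e:ℤ) by omega, zpow_natCast]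
  have hjj : (2:ℝ) ^ (j:ℤ) * (2:ℝ) ^ (-(j:ℤ)) = 1 := by
    rw [← zpow_add₀ (two_ne_zero)]; simp
  constructor
  · have h1 := mul_le_mul_of_nonneg_left hx.1 h2j.le
    rw [← mul_assoc, ← mul_assoc, key, hjj, one_mul] at h1
    have : ((k i * 2 ^ e : ℤ) : ℝ) ≤ ((m i : ℤ) : ℝ) := by push_cast; nlinarith
    exact_mod_cast this
  · have h1 := mul_lt_mul_of_pos_left hx.2 h2j
    rw [← mul_assoc, ← mul_assoc, key, hjj, one_mul] at h1
    have : ((m i : ℤ) : ℝ) < (((k i + 1) * 2 ^ e : ℤ) : ℝ) := by push_cast; nlinarith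
    exact_mod_cast this

private lemma cubeLp_le (d : ℕ) {p : ℝ≥0∞} (hp : p ≠ 0) (jP : ℤ) (k : Fin d → ℤ) (j : ℕ)
    (hj : jP ≤ (j:ℤ)) (u : (Fin d → ℤ) → ℂ) (B : ℝ≥0∞)
    (hB : ∀ m, (‖u m‖₊ : ℝ≥0∞) ≤ B) :
    cubeLpNorm d p jP k j u ≤ (2:ℝ≥0∞) ^ (((j:ℝ) - (jP:ℝ)) * d * (p⁻¹).toReal) * B := by
  by_cases hptop : p = ∞
  · subst hptop
    rw [cubeLpNorm, if_pos rfl]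
    simp only [ENNReal.inv_top, ENNReal.toReal_zero, mul_zero, ENNReal.rpow_zero, one_mul]
    exact iSup₂_le fun m _ => hB m
  · rw [cubeLpNorm, if_neg hptop]
    set pt := p.toReal with hpt
    have hpt0 : 0 < pt := ENNReal.toReal_pos hp hptop
    set e : ℕ := ((j:ℤ) - jP).toNat with he
    have hee : ((e:ℝ)) = (j:ℝ) - (jP:ℝ) := by
      have : (j:ℤ) - jP = (e:ℤ) := (Int.toNat_of_nonneg (by omega)).symm
      have := congrArg (fun z : ℤ => (z : ℝ)) this
      push_cast at this; linarith
    set F : Finset (Fin d → ℤ) :=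
      Fintype.piFinset (fun i => Finset.Ico (k i * 2 ^ e) ((k i + 1) * 2 ^ e)) with hF
    have hcard : (F.card : ℝ≥0∞) = (2:ℝ≥0∞) ^ (e * d) := by
      rw [hF, Fintype.card_piFinset]
      have : ∀ i : Fin d, (Finset.Ico (k i * 2 ^ e) ((k i + 1) * 2 ^ e)).card = 2 ^ e := by
        intro i
        rw [Int.card_Ico, show (k i + 1) * 2 ^ e - k i * 2 ^ e = ((2 ^ e : ℕ) : ℤ) by push_cast; ring,
          Int.toNat_natCast]
      simp only [this]
      rw [Finset.prod_const, Finset.card_univ, Fintype.card_fin]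
      push_cast
      rw [← pow_mul]
    have hsum : (∑' m : Fin d → ℤ,
          if dyadicCube d (j:ℤ) m ⊆ dyadicCube d jP k then (‖u m‖₊ : ℝ≥0∞) ^ pt else 0)
        ≤ (F.card : ℝ≥0∞) * B ^ pt := by
      calc (∑' m : Fin d → ℤ,
          if dyadicCube d (j:ℤ) m ⊆ dyadicCube d jP k then (‖u m‖₊ : ℝ≥0∞) ^ pt else 0)
          ≤ ∑' m : Fin d → ℤ, Set.indicator (↑F) (fun _ => B ^ pt) m := by
            refine ENNReal.tsum_le_tsum fun m => ?_
            by_cases hc : dyadicCube d (j:ℤ) m ⊆ dyadicCube d jP k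
            · rw [if_pos hc, Set.indicator_of_mem]
              · exact ENNReal.rpow_le_rpow (hB m) hpt0.le
              · rw [Finset.mem_coe, hF]
                exact Fintype.mem_piFinset.2 fun i =>
                  Finset.mem_Ico.2 (mem_box_of_subset hj hc i)
            · rw [if_neg hc]; exact zero_le
        _ = ∑ m ∈ F, B ^ pt := by
            rw [← tsum_subtype (F : Set (Fin d → ℤ)) (fun _ => B ^ pt),
              Finset.tsum_subtype' F (fun _ => B ^ pt)]
        _ = (F.card : ℝ≥0∞) * B ^ pt := by rw [Finset.sum_const, nsmul_eq_mul]
    calc (∑' m : Fin d → ℤ,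
          if dyadicCube d (j:ℤ) m ⊆ dyadicCube d jP k then (‖u m‖₊ : ℝ≥0∞) ^ pt else 0) ^ (1/pt)
        ≤ ((F.card : ℝ≥0∞) * B ^ pt) ^ (1/pt) := ENNReal.rpow_le_rpow hsum (by positivity)
      _ = (2:ℝ≥0∞) ^ (((j:ℝ) - (jP:ℝ)) * d * (p⁻¹).toReal) * B := by
          rw [ENNReal.mul_rpow_of_nonneg _ _ (by positivity), hcard]
          have h1 : ((2:ℝ≥0∞) ^ (e * d)) ^ (1/pt)
              = (2:ℝ≥0∞) ^ (((j:ℝ) - (jP:ℝ)) * d * (p⁻¹).toReal) := by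
            rw [← ENNReal.rpow_natCast 2 (e * d), ← ENNReal.rpow_mul]
            congr 1
            rw [ENNReal.toReal_inv, ← hpt]
            push_cast
            rw [hee]
            ring
          have h2 : ((B:ℝ≥0∞) ^ pt) ^ (1/pt) = B := by
            rw [← ENNReal.rpow_mul, mul_one_div_cancel hpt0.ne', ENNReal.rpow_one]
          rw [h1, h2]

private lemma le_cubeLp (d : ℕ) {p : ℝ≥0∞} (hp : p ≠ 0) (jP : ℤ) (k : Fin d → ℤ) (j : ℕ)
    (u : (Fin d → ℤ) → ℂ) (m : Fin d → ℤ)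
    (hm : dyadicCube d (j:ℤ) m ⊆ dyadicCube d jP k) :
    (‖u m‖₊ : ℝ≥0∞) ≤ cubeLpNorm d p jP k j u := by
  by_cases hptop : p = ∞
  · subst hptop
    rw [cubeLpNorm, if_pos rfl]
    exact le_iSup₂ (f := fun (m : Fin d → ℤ)
      (_ : m ∈ {m : Fin d → ℤ | dyadicCube d (j:ℤ) m ⊆ dyadicCube d jP k}) => (‖u m‖₊ : ℝ≥0∞)) m hm
  · rw [cubeLpNorm, if_neg hptop]
    have hpt0 : 0 < p.toReal := ENNReal.toReal_pos hp hptop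
    have h1 : (‖u m‖₊ : ℝ≥0∞) ^ p.toReal ≤ ∑' m' : Fin d → ℤ,
        if dyadicCube d (j:ℤ) m' ⊆ dyadicCube d jP k then (‖u m'‖₊ : ℝ≥0∞) ^ p.toReal else 0 := by
      have := ENNReal.le_tsum (f := fun m' : Fin d → ℤ =>
        if dyadicCube d (j:ℤ) m' ⊆ dyadicCube d jP k then (‖u m'‖₊ : ℝ≥0∞) ^ p.toReal else 0) m
      rwa [if_pos hm] at this
    calc (‖u m‖₊ : ℝ≥0∞) = ((‖u m‖₊ : ℝ≥0∞) ^ p.toReal) ^ (1/p.toReal) := by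
          rw [← ENNReal.rpow_mul, mul_one_div_cancel hpt0.ne', ENNReal.rpow_one]
      _ ≤ _ := ENNReal.rpow_le_rpow h1 (by positivity)

private lemma two_rpow_add (a b : ℝ) :
    (2:ℝ≥0∞) ^ (a + b) = (2:ℝ≥0∞) ^ a * (2:ℝ≥0∞) ^ b :=
  ENNReal.rpow_add a b (by norm_num) ENNReal.ofNat_ne_top

private lemma key_est (d : ℕ) (s τ : ℝ) (p : ℝ≥0∞) (hp : p ≠ 0) (M : ℝ≥0∞)
    (u : ℕ → (Fin d → ℤ) → ℂ)
    (hM : ∀ (j : ℕ) (m : Fin d → ℤ),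
      (2:ℝ≥0∞) ^ ((j:ℝ) * (s + d * (τ - (p⁻¹).toReal) + d / 2)) * (‖u j m‖₊ : ℝ≥0∞) ≤ M)
    (jP : ℤ) (k : Fin d → ℤ) (j : ℕ) (hj : jP ≤ (j:ℤ)) :
    (2:ℝ≥0∞) ^ ((j:ℝ) * (s + d / 2 - d / p.toReal)) * cubeLpNorm d p jP k j (u j)
      ≤ (2:ℝ≥0∞) ^ (-((jP:ℝ) * d * τ) - ((j:ℝ) - (jP:ℝ)) * (d * (τ - (p⁻¹).toReal))) * M := by
  have hB : ∀ m, (‖u j m‖₊ : ℝ≥0∞)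
      ≤ (2:ℝ≥0∞) ^ (-((j:ℝ) * (s + d * (τ - (p⁻¹).toReal) + d / 2))) * M := by
    intro m
    calc (‖u j m‖₊ : ℝ≥0∞)
        = (2:ℝ≥0∞) ^ (-((j:ℝ) * (s + d * (τ - (p⁻¹).toReal) + d / 2))) *
            ((2:ℝ≥0∞) ^ ((j:ℝ) * (s + d * (τ - (p⁻¹).toReal) + d / 2)) * (‖u j m‖₊ : ℝ≥0∞)) := by
          rw [← mul_assoc, ← two_rpow_add, neg_add_cancel, ENNReal.rpow_zero, one_mul]
      _ ≤ _ := mul_le_mul_right (hM j m) _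
  have h2 := cubeLp_le d hp jP k j hj (u j) _ hB
  calc (2:ℝ≥0∞) ^ ((j:ℝ) * (s + d / 2 - d / p.toReal)) * cubeLpNorm d p jP k j (u j)
      ≤ (2:ℝ≥0∞) ^ ((j:ℝ) * (s + d / 2 - d / p.toReal)) *
          ((2:ℝ≥0∞) ^ (((j:ℝ) - (jP:ℝ)) * d * (p⁻¹).toReal) *
            ((2:ℝ≥0∞) ^ (-((j:ℝ) * (s + d * (τ - (p⁻¹).toReal) + d / 2))) * M)) :=
        mul_le_mul_right h2 _
    _ = (2:ℝ≥0∞) ^ ((j:ℝ) * (s + d / 2 - d / p.toReal) + (((j:ℝ) - (jP:ℝ)) * d * (p⁻¹).toReal +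
          -((j:ℝ) * (s + d * (τ - (p⁻¹).toReal) + d / 2)))) * M := by
        rw [two_rpow_add, two_rpow_add]
        ring
    _ = (2:ℝ≥0∞) ^ (-((jP:ℝ) * d * τ) - ((j:ℝ) - (jP:ℝ)) * (d * (τ - (p⁻¹).toReal))) * M := by
        congr 1
        have hdpt : (d:ℝ) / p.toReal = (d:ℝ) * (p⁻¹).toReal := by
          rw [ENNReal.toReal_inv, div_eq_mul_inv]
        rw [hdpt]
        ring

private lemma upper_infty (d : ℕ) (s τ : ℝ) (p : ℝ≥0∞) (hp : p ≠ 0)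
    (hτ : (p⁻¹).toReal ≤ τ) (hd0 : (0:ℝ) ≤ d) (J0 : ℤ) (K0 : Fin d → ℤ)
    (t : Fin (2 ^ d - 1) → ℕ → (Fin d → ℤ) → ℂ) (M : ℝ≥0∞)
    (hM : ∀ (i : Fin (2 ^ d - 1)) (j : ℕ) (m : Fin d → ℤ),
      (2:ℝ≥0∞) ^ ((j:ℝ) * (s + d * (τ - (p⁻¹).toReal) + d / 2)) * (‖t i j m‖₊ : ℝ≥0∞) ≤ M) :
    seqNorm d s τ p ⊤ J0 K0 t ≤ M := by
  simp only [seqNorm, eq_self_iff_true, if_true]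
  refine iSup_le fun jP => iSup_le fun k => iSup_le fun _ => ?_
  have hX : (⨆ (j : ℕ) (_ : jP ≤ (j:ℤ)) (i : Fin (2 ^ d - 1)),
      (2:ℝ≥0∞) ^ ((j:ℝ) * (s + d / 2 - d / p.toReal)) * cubeLpNorm d p jP k j (t i j))
      ≤ (2:ℝ≥0∞) ^ (-((jP:ℝ) * d * τ)) * M := by
    refine iSup_le fun j => iSup_le fun hj => iSup_le fun i => ?_
    refine (key_est d s τ p hp M (t i) (hM i) jP k j hj).trans (mul_le_mul_left ?_ M)
    refine ENNReal.rpow_le_rpow_of_exponent_le (by norm_num) ?_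
    have hjr : (jP:ℝ) ≤ (j:ℝ) := by exact_mod_cast hj
    have hδ : (0:ℝ) ≤ (d:ℝ) * (τ - (p⁻¹).toReal) := mul_nonneg hd0 (by linarith)
    nlinarith
  refine le_trans (mul_le_mul_right hX _) ?_
  rw [← mul_assoc, ← two_rpow_add, add_neg_cancel, ENNReal.rpow_zero, one_mul]

private lemma upper_fin (d : ℕ) (s τ : ℝ) (p q : ℝ≥0∞) (hp : p ≠ 0) (hq : q ≠ 0)
    (hqtop : q ≠ ⊤) (hd0 : (0:ℝ) < d) (hτ : (p⁻¹).toReal < τ) (J0 : ℤ) (K0 : Fin d → ℤ)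
    (t : Fin (2 ^ d - 1) → ℕ → (Fin d → ℤ) → ℂ) (M : ℝ≥0∞)
    (hM : ∀ (i : Fin (2 ^ d - 1)) (j : ℕ) (m : Fin d → ℤ),
      (2:ℝ≥0∞) ^ ((j:ℝ) * (s + d * (τ - (p⁻¹).toReal) + d / 2)) * (‖t i j m‖₊ : ℝ≥0∞) ≤ M) :
    seqNorm d s τ p q J0 K0 t ≤
      (((2:ℝ≥0∞) ^ (d:ℕ) *
        (1 - (2:ℝ≥0∞) ^ (-(((d:ℝ) * (τ - (p⁻¹).toReal)) * q.toReal)))⁻¹) ^ (1 / q.toReal)) * M := by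
  have hqt0 : 0 < q.toReal := ENNReal.toReal_pos hq hqtop
  set δ : ℝ := (d:ℝ) * (τ - (p⁻¹).toReal) with hδdef
  have hδ0 : 0 < δ := mul_pos hd0 (by linarith)
  set qt := q.toReal with hqt
  set r : ℝ≥0∞ := (2:ℝ≥0∞) ^ (-(δ * qt)) with hrdef
  set C1 : ℝ≥0∞ := ((2:ℝ≥0∞) ^ (d:ℕ) * (1 - r)⁻¹) ^ (1 / qt) with hC1def
  simp only [seqNorm, eq_false hqtop, if_false]
  refine iSup_le fun jP => iSup_le fun k => iSup_le fun _ => ?_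
  set C : ℝ≥0∞ := (2:ℝ≥0∞) ^ (d:ℕ) * (((2:ℝ≥0∞) ^ (-((jP:ℝ) * d * τ))) ^ qt * M ^ qt) with hCdef
  have hle : ∀ (j : ℕ), jP ≤ (j:ℤ) →
      (∑ i : Fin (2 ^ d - 1),
        ((2:ℝ≥0∞) ^ ((j:ℝ) * (s + d / 2 - d / p.toReal)) * cubeLpNorm d p jP k j (t i j)) ^ qt)
      ≤ C * r ^ (((j:ℤ) - jP).toNat) := by
    intro j hj
    have hn : ((((j:ℤ) - jP).toNat : ℕ) : ℝ) = (j:ℝ) - (jP:ℝ) := by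
      have h1 : ((((j:ℤ) - jP).toNat : ℕ) : ℤ) = (j:ℤ) - jP := Int.toNat_of_nonneg (by omega)
      have := congrArg (fun z : ℤ => (z : ℝ)) h1
      push_cast at this; linarith
    have hfact : ((2:ℝ≥0∞) ^ (-((jP:ℝ) * d * τ) - ((j:ℝ) - (jP:ℝ)) * δ) * M) ^ qt
        = ((2:ℝ≥0∞) ^ (-((jP:ℝ) * d * τ))) ^ qt * M ^ qt * r ^ (((j:ℤ) - jP).toNat) := by
      have hb : ((2:ℝ≥0∞) ^ (-(((j:ℝ) - (jP:ℝ)) * δ))) ^ qt = r ^ (((j:ℤ) - jP).toNat) := by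
        rw [hrdef, ← ENNReal.rpow_natCast ((2:ℝ≥0∞) ^ (-(δ * qt))) (((j:ℤ) - jP).toNat),
          ← ENNReal.rpow_mul, ← ENNReal.rpow_mul]
        congr 1
        rw [hn]
        ring
      rw [sub_eq_add_neg, two_rpow_add, ENNReal.mul_rpow_of_nonneg _ _ hqt0.le,
        ENNReal.mul_rpow_of_nonneg _ _ hqt0.le, hb]
      exact mul_right_comm _ _ _
    have hbound : ∀ i : Fin (2 ^ d - 1),
        ((2:ℝ≥0∞) ^ ((j:ℝ) * (s + d / 2 - d / p.toReal)) * cubeLpNorm d p jP k j (t i j)) ^ qt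
        ≤ ((2:ℝ≥0∞) ^ (-((jP:ℝ) * d * τ) - ((j:ℝ) - (jP:ℝ)) * δ) * M) ^ qt := fun i =>
      ENNReal.rpow_le_rpow (key_est d s τ p hp M (t i) (hM i) jP k j hj) hqt0.le
    calc (∑ i : Fin (2 ^ d - 1),
        ((2:ℝ≥0∞) ^ ((j:ℝ) * (s + d / 2 - d / p.toReal)) * cubeLpNorm d p jP k j (t i j)) ^ qt)
        ≤ (Finset.univ : Finset (Fin (2 ^ d - 1))).card •
            (((2:ℝ≥0∞) ^ (-((jP:ℝ) * d * τ) - ((j:ℝ) - (jP:ℝ)) * δ) * M) ^ qt) :=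
          Finset.sum_le_card_nsmul _ _ _ (fun i _ => hbound i)
      _ = ((2 ^ d - 1 : ℕ) : ℝ≥0∞) *
            (((2:ℝ≥0∞) ^ (-((jP:ℝ) * d * τ) - ((j:ℝ) - (jP:ℝ)) * δ) * M) ^ qt) := by
          rw [nsmul_eq_mul, Finset.card_univ, Fintype.card_fin]
      _ ≤ ((2:ℝ≥0∞) ^ (d:ℕ)) *
            (((2:ℝ≥0∞) ^ (-((jP:ℝ) * d * τ) - ((j:ℝ) - (jP:ℝ)) * δ) * M) ^ qt) := by
          refine mul_le_mul_left ?_ _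
          have h1 : ((2 ^ d - 1 : ℕ) : ℝ≥0∞) ≤ ((2 ^ d : ℕ) : ℝ≥0∞) :=
            Nat.cast_le.2 (Nat.sub_le _ _)
          simpa using h1
      _ = C * r ^ (((j:ℤ) - jP).toNat) := by
          rw [hfact, hCdef]
          ring
  have hG : (∑' j : ℕ, if jP ≤ (j:ℤ) then r ^ (((j:ℤ) - jP).toNat) else 0) ≤ (1 - r)⁻¹ := by
    have hsupp : Function.support (fun j : ℕ => if jP ≤ (j:ℤ) then r ^ (((j:ℤ) - jP).toNat) else 0)
        ⊆ {j : ℕ | jP ≤ (j:ℤ)} := by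
      intro j hj
      by_contra hc
      exact hj (if_neg hc)
    rw [← tsum_subtype_eq_of_support_subset hsupp]
    have hcongr : ∀ x : {j : ℕ // jP ≤ ((j:ℕ):ℤ)},
        (if jP ≤ (((x:ℕ)):ℤ) then r ^ ((((x:ℕ):ℤ) - jP).toNat) else 0)
          = r ^ ((((x:ℕ):ℤ) - jP).toNat) := fun x => if_pos x.2
    calc (∑' x : {j : ℕ | jP ≤ ((j:ℕ):ℤ)},
          if jP ≤ (((x:ℕ)):ℤ) then r ^ ((((x:ℕ):ℤ) - jP).toNat) else 0)
        = ∑' x : {j : ℕ | jP ≤ ((j:ℕ):ℤ)}, r ^ ((((x:ℕ):ℤ) - jP).toNat) := tsum_congr hcongr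
      _ ≤ ∑' n : ℕ, r ^ n := by
          refine ENNReal.tsum_comp_le_tsum_of_injective
            (f := fun x : {j : ℕ | jP ≤ ((j:ℕ):ℤ)} => (((x:ℕ):ℤ) - jP).toNat) ?_ (fun n => r ^ n)
          intro a b hab
          have ha := a.2
          have hb := b.2
          simp only [Set.mem_setOf_eq] at ha hb
          have hab' : (((a : ℕ) : ℤ) - jP).toNat = (((b : ℕ) : ℤ) - jP).toNat := hab
          apply Subtype.ext
          omega
      _ = (1 - r)⁻¹ := ENNReal.tsum_geometric r
  have hS : (∑' j : ℕ,
      if jP ≤ (j:ℤ) then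
        ∑ i : Fin (2 ^ d - 1),
          ((2:ℝ≥0∞) ^ ((j:ℝ) * (s + d / 2 - d / p.toReal)) * cubeLpNorm d p jP k j (t i j)) ^ qt
      else 0) ≤ C * (1 - r)⁻¹ := by
    calc (∑' j : ℕ,
        if jP ≤ (j:ℤ) then
          ∑ i : Fin (2 ^ d - 1),
            ((2:ℝ≥0∞) ^ ((j:ℝ) * (s + d / 2 - d / p.toReal)) * cubeLpNorm d p jP k j (t i j)) ^ qt
        else 0)
        ≤ ∑' j : ℕ, (if jP ≤ (j:ℤ) then C * r ^ (((j:ℤ) - jP).toNat) else 0) := by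
          refine ENNReal.tsum_le_tsum fun j => ?_
          by_cases hj : jP ≤ (j:ℤ)
          · rw [if_pos hj, if_pos hj]; exact hle j hj
          · rw [if_neg hj, if_neg hj]
      _ = C * (∑' j : ℕ, if jP ≤ (j:ℤ) then r ^ (((j:ℤ) - jP).toNat) else 0) := by
          rw [← ENNReal.tsum_mul_left]
          exact tsum_congr fun j => by by_cases hj : jP ≤ (j:ℤ) <;> simp [hj]
      _ ≤ C * (1 - r)⁻¹ := mul_le_mul_right hG _
  have rpow_inv : ∀ x : ℝ≥0∞, (x ^ qt) ^ (1 / qt) = x := fun x => by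
    rw [← ENNReal.rpow_mul, mul_one_div_cancel hqt0.ne', ENNReal.rpow_one]
  have hfin : ((C * (1 - r)⁻¹) : ℝ≥0∞) ^ (1 / qt) = C1 * ((2:ℝ≥0∞) ^ (-((jP:ℝ) * d * τ)) * M) := by
    have hre : C * (1 - r)⁻¹
        = ((2:ℝ≥0∞) ^ (d:ℕ) * (1 - r)⁻¹) *
            (((2:ℝ≥0∞) ^ (-((jP:ℝ) * d * τ))) ^ qt * M ^ qt) := by
      rw [hCdef]; ring
    rw [hre, ENNReal.mul_rpow_of_nonneg _ _ (by positivity),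
      ENNReal.mul_rpow_of_nonneg _ _ (by positivity),
      ENNReal.mul_rpow_of_nonneg _ _ (by positivity), rpow_inv, rpow_inv, hC1def,
      ENNReal.mul_rpow_of_nonneg _ _ (by positivity)]
  calc (2:ℝ≥0∞) ^ ((jP:ℝ) * d * τ) * (∑' j : ℕ,
        if jP ≤ (j:ℤ) then
          ∑ i : Fin (2 ^ d - 1),
            ((2:ℝ≥0∞) ^ ((j:ℝ) * (s + d / 2 - d / p.toReal)) * cubeLpNorm d p jP k j (t i j)) ^ qt
        else 0) ^ (1 / qt)
      ≤ (2:ℝ≥0∞) ^ ((jP:ℝ) * d * τ) * (C1 * ((2:ℝ≥0∞) ^ (-((jP:ℝ) * d * τ)) * M)) := by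
        refine mul_le_mul_right ?_ _
        rw [← hfin]
        exact ENNReal.rpow_le_rpow hS (by positivity)
    _ = C1 * (((2:ℝ≥0∞) ^ ((jP:ℝ) * d * τ) * (2:ℝ≥0∞) ^ (-((jP:ℝ) * d * τ))) * M) := by
        ring
    _ = C1 * M := by
        rw [← two_rpow_add, add_neg_cancel, ENNReal.rpow_zero, one_mul]

private lemma lower_bound (d : ℕ) (s τ : ℝ) (p q : ℝ≥0∞) (hp : p ≠ 0) (hq : q ≠ 0)
    (J0 : ℤ) (K0 : Fin d → ℤ) (t : Fin (2 ^ d - 1) → ℕ → (Fin d → ℤ) → ℂ)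
    (ht : SupportedIn d J0 K0 t) :
    (⨆ (j : ℕ) (i : Fin (2 ^ d - 1)) (m : Fin d → ℤ),
        (2 : ℝ≥0∞) ^ ((j : ℝ) * (s + d * (τ - (p⁻¹).toReal) + d / 2)) * (‖t i j m‖₊ : ℝ≥0∞))
      ≤ seqNorm d s τ p q J0 K0 t := by
  refine iSup_le fun j => iSup_le fun i => iSup_le fun m => ?_
  by_cases hsub : dyadicCube d (j:ℤ) m ⊆ dyadicCube d J0 K0
  · have hterm : (2 : ℝ≥0∞) ^ (((((j:ℕ):ℤ)):ℝ) * d * τ) *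
        (if q = ∞ then
          ⨆ (j' : ℕ) (_ : ((j:ℕ):ℤ) ≤ (j' : ℤ)) (i' : Fin (2 ^ d - 1)),
            (2 : ℝ≥0∞) ^ ((j' : ℝ) * (s + d / 2 - d / p.toReal)) *
              cubeLpNorm d p ((j:ℕ):ℤ) m j' (t i' j')
        else
          (∑' j' : ℕ,
              if ((j:ℕ):ℤ) ≤ (j' : ℤ) then
                ∑ i' : Fin (2 ^ d - 1),
                  ((2 : ℝ≥0∞) ^ ((j' : ℝ) * (s + d / 2 - d / p.toReal)) *
                      cubeLpNorm d p ((j:ℕ):ℤ) m j' (t i' j')) ^ q.toReal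
              else 0) ^ (1 / q.toReal)) ≤ seqNorm d s τ p q J0 K0 t := by
      rw [seqNorm]
      exact le_iSup_of_le ((j:ℕ):ℤ) (le_iSup_of_le m (le_iSup_of_le hsub le_rfl))
    refine le_trans ?_ hterm
    have hc : (‖t i j m‖₊ : ℝ≥0∞) ≤ cubeLpNorm d p ((j:ℕ):ℤ) m j (t i j) :=
      le_cubeLp d hp ((j:ℕ):ℤ) m j (t i j) m subset_rfl
    have hX : (2:ℝ≥0∞) ^ ((j:ℝ) * (s + d / 2 - d / p.toReal)) * cubeLpNorm d p ((j:ℕ):ℤ) m j (t i j)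
        ≤ (if q = ∞ then
          ⨆ (j' : ℕ) (_ : ((j:ℕ):ℤ) ≤ (j' : ℤ)) (i' : Fin (2 ^ d - 1)),
            (2 : ℝ≥0∞) ^ ((j' : ℝ) * (s + d / 2 - d / p.toReal)) *
              cubeLpNorm d p ((j:ℕ):ℤ) m j' (t i' j')
        else
          (∑' j' : ℕ,
              if ((j:ℕ):ℤ) ≤ (j' : ℤ) then
                ∑ i' : Fin (2 ^ d - 1),
                  ((2 : ℝ≥0∞) ^ ((j' : ℝ) * (s + d / 2 - d / p.toReal)) *
                      cubeLpNorm d p ((j:ℕ):ℤ) m j' (t i' j')) ^ q.toReal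
              else 0) ^ (1 / q.toReal)) := by
      by_cases hqtop : q = ∞
      · rw [if_pos hqtop]
        exact le_iSup_of_le j (le_iSup_of_le (le_refl ((j:ℕ):ℤ)) (le_iSup_of_le i le_rfl))
      · rw [if_neg hqtop]
        have hqt0 : 0 < q.toReal := ENNReal.toReal_pos hq hqtop
        have h1 : ((2:ℝ≥0∞) ^ ((j:ℝ) * (s + d / 2 - d / p.toReal)) *
            cubeLpNorm d p ((j:ℕ):ℤ) m j (t i j)) ^ q.toReal
            ≤ ∑' j' : ℕ,
              if ((j:ℕ):ℤ) ≤ (j' : ℤ) then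
                ∑ i' : Fin (2 ^ d - 1),
                  ((2 : ℝ≥0∞) ^ ((j' : ℝ) * (s + d / 2 - d / p.toReal)) *
                      cubeLpNorm d p ((j:ℕ):ℤ) m j' (t i' j')) ^ q.toReal
              else 0 := by
          refine le_trans ?_ (ENNReal.le_tsum (f := fun j' : ℕ =>
              if ((j:ℕ):ℤ) ≤ (j' : ℤ) then
                ∑ i' : Fin (2 ^ d - 1),
                  ((2 : ℝ≥0∞) ^ ((j' : ℝ) * (s + d / 2 - d / p.toReal)) *
                      cubeLpNorm d p ((j:ℕ):ℤ) m j' (t i' j')) ^ q.toReal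
              else 0) j)
          rw [if_pos (le_refl ((j:ℕ):ℤ))]
          exact Finset.single_le_sum (f := fun i' : Fin (2 ^ d - 1) =>
            ((2 : ℝ≥0∞) ^ ((j : ℝ) * (s + d / 2 - d / p.toReal)) *
              cubeLpNorm d p ((j:ℕ):ℤ) m j (t i' j)) ^ q.toReal)
            (fun i' _ => zero_le) (Finset.mem_univ i)
        calc (2:ℝ≥0∞) ^ ((j:ℝ) * (s + d / 2 - d / p.toReal)) *
              cubeLpNorm d p ((j:ℕ):ℤ) m j (t i j)
            = (((2:ℝ≥0∞) ^ ((j:ℝ) * (s + d / 2 - d / p.toReal)) *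
              cubeLpNorm d p ((j:ℕ):ℤ) m j (t i j)) ^ q.toReal) ^ (1 / q.toReal) := by
              rw [← ENNReal.rpow_mul, mul_one_div_cancel hqt0.ne', ENNReal.rpow_one]
          _ ≤ _ := ENNReal.rpow_le_rpow h1 (by positivity)
    calc (2 : ℝ≥0∞) ^ ((j : ℝ) * (s + d * (τ - (p⁻¹).toReal) + d / 2)) * (‖t i j m‖₊ : ℝ≥0∞)
        = (2 : ℝ≥0∞) ^ (((((j:ℕ):ℤ)):ℝ) * d * τ) *
            ((2:ℝ≥0∞) ^ ((j:ℝ) * (s + d / 2 - d / p.toReal)) * (‖t i j m‖₊ : ℝ≥0∞)) := by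
          rw [← mul_assoc, ← two_rpow_add]
          congr 2
          have hdpt : (d:ℝ) / p.toReal = (d:ℝ) * (p⁻¹).toReal := by
            rw [ENNReal.toReal_inv, div_eq_mul_inv]
          rw [hdpt]
          push_cast
          ring
      _ ≤ _ := mul_le_mul_right (le_trans (mul_le_mul_right hc _) hX) _
  · rw [ht i j m hsub]
    simp

/-- Sequence-space version of the coincidence `A^{s,τ}_{p,q} = B^{s+d(τ-1/p)}_{∞,∞}`
for `τ > 1/p`, or `τ = 1/p` and `q = ∞`: for sequences supported in a fixed dyadic
cube `Q̃₀`, `‖t ∣ b̃^{s,τ}_{p,q}(Q̃₀)‖ ∼ sup_{j≥0} 2^{j(s+d(τ-1/p)+d/2)} sup_{i,m} |t_{i,j,m}|`. -/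
theorem statement12 (d : ℕ) (hd : 1 ≤ d) (s τ : ℝ) (p q : ℝ≥0∞) (hp : 0 < p) (hq : 0 < q)
    (h : (p⁻¹).toReal < τ ∨ (τ = (p⁻¹).toReal ∧ q = ∞)) (J0 : ℤ) (K0 : Fin d → ℤ) :
    ∃ C1 C2 : ℝ≥0∞, 0 < C1 ∧ C1 < ∞ ∧ 0 < C2 ∧ C2 < ∞ ∧
      ∀ t : Fin (2 ^ d - 1) → ℕ → (Fin d → ℤ) → ℂ, SupportedIn d J0 K0 t →
        (seqNorm d s τ p q J0 K0 t ≤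
            C1 * ⨆ (j : ℕ) (i : Fin (2 ^ d - 1)) (m : Fin d → ℤ),
              (2 : ℝ≥0∞) ^ ((j : ℝ) * (s + d * (τ - (p⁻¹).toReal) + d / 2)) *
                (‖t i j m‖₊ : ℝ≥0∞)) ∧
          (⨆ (j : ℕ) (i : Fin (2 ^ d - 1)) (m : Fin d → ℤ),
              (2 : ℝ≥0∞) ^ ((j : ℝ) * (s + d * (τ - (p⁻¹).toReal) + d / 2)) *
                (‖t i j m‖₊ : ℝ≥0∞))
            ≤ C2 * seqNorm d s τ p q J0 K0 t := by
  have hd0 : (0:ℝ) < (d:ℝ) := by exact_mod_cast hd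
  by_cases hqtop : q = ⊤
  · subst hqtop
    have hτ : (p⁻¹).toReal ≤ τ := by
      rcases h with h1 | h1
      · exact h1.le
      · exact le_of_eq h1.1.symm
    refine ⟨1, 1, zero_lt_one, ENNReal.one_lt_top, zero_lt_one, ENNReal.one_lt_top,
      fun t ht => ⟨?_, ?_⟩⟩
    · rw [one_mul]
      exact upper_infty d s τ p hp.ne' hτ hd0.le J0 K0 t _
        (fun i j m => le_iSup_of_le j (le_iSup_of_le i (le_iSup_of_le m le_rfl)))
    · rw [one_mul]
      exact lower_bound d s τ p ⊤ hp.ne' hq.ne' J0 K0 t ht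
  · have hτ : (p⁻¹).toReal < τ := by
      rcases h with h1 | h1
      · exact h1
      · exact absurd h1.2 hqtop
    have hqt0 : 0 < q.toReal := ENNReal.toReal_pos hq.ne' hqtop
    set r : ℝ≥0∞ := (2:ℝ≥0∞) ^ (-(((d:ℝ) * (τ - (p⁻¹).toReal)) * q.toReal)) with hrdef
    have hr1 : r < 1 := by
      have hlt := ENNReal.rpow_lt_rpow_of_exponent_lt (x := 2) (by norm_num) ENNReal.ofNat_ne_top
        (show -(((d:ℝ) * (τ - (p⁻¹).toReal)) * q.toReal) < (0:ℝ) by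
          have := mul_pos (mul_pos hd0 (sub_pos.2 hτ)) hqt0; linarith)
      rw [ENNReal.rpow_zero] at hlt
      exact hlt
    have hbase_ne0 : (2:ℝ≥0∞) ^ (d:ℕ) * (1 - r)⁻¹ ≠ 0 :=
      mul_ne_zero (pow_ne_zero d (by norm_num))
        (ENNReal.inv_ne_zero.2 (ne_top_of_le_ne_top ENNReal.one_ne_top tsub_le_self))
    have hbase_netop : (2:ℝ≥0∞) ^ (d:ℕ) * (1 - r)⁻¹ ≠ ⊤ := by
      refine ENNReal.mul_ne_top ?_ ?_
      · exact ENNReal.pow_ne_top ENNReal.ofNat_ne_top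
      · exact ENNReal.inv_ne_top.2 (tsub_pos_iff_lt.2 hr1).ne'
    refine ⟨((2:ℝ≥0∞) ^ (d:ℕ) * (1 - r)⁻¹) ^ (1 / q.toReal), 1,
      ENNReal.rpow_pos (zero_lt_iff.mpr hbase_ne0) hbase_netop,
      ENNReal.rpow_lt_top_of_nonneg (by positivity) hbase_netop,
      zero_lt_one, ENNReal.one_lt_top, fun t ht => ⟨?_, ?_⟩⟩
    · exact upper_fin d s τ p q hp.ne' hq.ne' hqtop hd0 hτ J0 K0 t _
        (fun i j m => le_iSup_of_le j (le_iSup_of_le i (le_iSup_of_le m le_rfl)))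
    · rw [one_mul]
      exact lower_bound d s τ p q hp.ne' hq.ne' J0 K0 t ht


end
end

section
/- Let $d\ge1$, $s_2\in\mathbb{R}$, $0<p_2<\infty$, $0<q_2<\infty$, $0\le\tau_2\le 1/p_2$. Define $\lambda_{i,j,m}=2^{-j(s_2+d/2)}$ if $i=1$ and $Q_{j,m}\subset Q_{0,0}=[0,1)^d$, and $0$ otherwise. Then for every dyadic cube $P\subset Q_{0,0}$ and every $j\ge j_P$ one has $2^{j(s_2+d/2-d/p_2)}(\sum_{m:Q_{j,m}\subset P}|\lambda_{1,j,m}|^{p_2})^{1/p_2}=2^{-j_P d/p_2}$, and consequently $\|\lambda\mid\tilde b^{s_2,\tau_2}_{p_2,q_2}\|=\infty$, while $\sup_{j}2^{j(s_2+d/2)}\sup_{i,m}|\lambda_{i,j,m}|=1$. -/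
open MeasureTheory ENNReal

noncomputable section

attribute [local instance] Classical.propDecidable

lemma dyadicCube_eq_pi (d : ℕ) (j : ℤ) (k : Fin d → ℤ) :
    dyadicCube d j k = Set.pi Set.univ
      (fun i => Set.Ico ((2:ℝ)^(-j) * k i) ((2:ℝ)^(-j) * (k i + 1))) := by
  ext x; simp [dyadicCube, Set.mem_pi, Set.mem_Ico]

lemma coord_lt (j : ℤ) (m : ℤ) : (2:ℝ)^(-j) * m < (2:ℝ)^(-j) * (m + 1) := by
  have h : (0:ℝ) < (2:ℝ)^(-j) := zpow_pos (by norm_num) _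
  nlinarith

lemma ineq1 (j jP : ℤ) (h : jP ≤ j) (a b : ℤ) :
    ((2:ℝ)^(-jP) * a ≤ (2:ℝ)^(-j) * b) ↔ 2 ^ (j - jP).toNat * a ≤ b := by
  have h2 : (0:ℝ) < (2:ℝ)^j := zpow_pos (by norm_num) _
  rw [← mul_le_mul_iff_right₀ h2]
  have e1 : (2:ℝ)^j * ((2:ℝ)^(-jP) * a) = (2:ℝ)^(j - jP) * a := by
    rw [← mul_assoc, ← zpow_add₀ (by norm_num : (2:ℝ) ≠ 0)]; ring_nf
  have e2 : (2:ℝ)^j * ((2:ℝ)^(-j) * b) = b := by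
    rw [← mul_assoc, ← zpow_add₀ (by norm_num : (2:ℝ) ≠ 0)]; simp
  rw [e1, e2]
  have e3 : (2:ℝ)^(j - jP) = ((2 ^ (j - jP).toNat : ℤ) : ℝ) := by
    have ht : ((j - jP).toNat : ℤ) = j - jP := Int.toNat_of_nonneg (sub_nonneg.mpr h)
    rw [← ht, zpow_natCast]
    push_cast
    simp
    omega
  rw [e3, ← Int.cast_mul]
  exact Int.cast_le

lemma ineq2 (j jP : ℤ) (h : jP ≤ j) (a b : ℤ) :
    ((2:ℝ)^(-j) * (b + 1) ≤ (2:ℝ)^(-jP) * (a + 1)) ↔ b < 2 ^ (j - jP).toNat * (a + 1) := by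
  have h2 : (0:ℝ) < (2:ℝ)^j := zpow_pos (by norm_num) _
  rw [← mul_le_mul_iff_right₀ h2]
  have e1 : (2:ℝ)^j * ((2:ℝ)^(-jP) * (a+1)) = (2:ℝ)^(j - jP) * (a+1) := by
    rw [← mul_assoc, ← zpow_add₀ (by norm_num : (2:ℝ) ≠ 0)]; ring_nf
  have e2 : (2:ℝ)^j * ((2:ℝ)^(-j) * (b+1)) = (b+1) := by
    rw [← mul_assoc, ← zpow_add₀ (by norm_num : (2:ℝ) ≠ 0)]; simp
  rw [e1, e2]
  have e3 : (2:ℝ)^(j - jP) = ((2 ^ (j - jP).toNat : ℤ) : ℝ) := by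
    have ht : ((j - jP).toNat : ℤ) = j - jP := Int.toNat_of_nonneg (sub_nonneg.mpr h)
    rw [← ht, zpow_natCast]
    push_cast
    simp
    omega
  rw [e3]
  rw [show ((b:ℝ)+1) = ((b+1 : ℤ):ℝ) by push_cast; ring,
    show ((2 ^ (j - jP).toNat : ℤ):ℝ) * ((a:ℝ)+1) = ((2 ^ (j - jP).toNat * (a+1) : ℤ):ℝ) by push_cast; ring]
  rw [Int.cast_le]
  omega

lemma cube_subset_iff (d : ℕ) (j jP : ℤ) (h : jP ≤ j) (m k : Fin d → ℤ) :
    (dyadicCube d j m ⊆ dyadicCube d jP k) ↔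
      ∀ i, 2 ^ (j - jP).toNat * k i ≤ m i ∧ m i < 2 ^ (j - jP).toNat * (k i + 1) := by
  rw [dyadicCube_eq_pi, dyadicCube_eq_pi, Set.univ_pi_subset_univ_pi_iff]
  constructor
  · rintro (hs | ⟨i, hi⟩)
    · intro i
      have := hs i
      rw [Set.Ico_subset_Ico_iff (coord_lt _ _)] at this
      exact ⟨(ineq1 j jP h _ _).mp this.1, (ineq2 j jP h _ _).mp this.2⟩
    · exact absurd hi (Set.Nonempty.ne_empty ⟨_, Set.left_mem_Ico.mpr (coord_lt _ _)⟩)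
  · intro hi
    left
    intro i
    rw [Set.Ico_subset_Ico_iff (coord_lt _ _)]
    exact ⟨(ineq1 j jP h _ _).mpr (hi i).1, (ineq2 j jP h _ _).mpr (hi i).2⟩

lemma key (d : ℕ) (p : ℝ≥0∞) (hp0 : p ≠ 0) (hpt : p ≠ ∞) (s2 : ℝ)
    (jP : ℤ) (k : Fin d → ℤ) (j : ℕ) (hj : jP ≤ (j:ℤ))
    (u : (Fin d → ℤ) → ℂ)
    (hu : ∀ m, dyadicCube d (j:ℤ) m ⊆ dyadicCube d jP k →
      u m = (((2:ℝ) ^ (-(j : ℝ) * (s2 + d / 2)) : ℝ) : ℂ)) :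
    (2 : ℝ≥0∞) ^ ((j : ℝ) * (s2 + d / 2 - d / p.toReal)) *
        ((∑' m : Fin d → ℤ,
        if dyadicCube d (j : ℤ) m ⊆ dyadicCube d jP k then (‖u m‖₊ : ℝ≥0∞) ^ p.toReal
        else 0) ^ (1 / p.toReal))
      = (2 : ℝ≥0∞) ^ (-(jP : ℝ) * d / p.toReal) := by
  set n : ℕ := ((j:ℤ) - jP).toNat with hn
  have hn' : (n : ℝ) = (j : ℝ) - (jP : ℝ) := by
    have : ((n : ℤ) : ℝ) = (((j:ℤ) - jP : ℤ) : ℝ) := by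
      rw [hn, Int.toNat_of_nonneg (sub_nonneg.mpr hj)]
    push_cast at this ⊢
    linarith
  set pr := p.toReal with hprdef
  have hpr : 0 < pr := ENNReal.toReal_pos hp0 hpt
  set x : ℝ := -(j : ℝ) * (s2 + d / 2) with hx
  have hval : ∀ m : Fin d → ℤ, dyadicCube d (j:ℤ) m ⊆ dyadicCube d jP k →
      (‖u m‖₊ : ℝ≥0∞) = (2 : ℝ≥0∞) ^ x := by
    intro m hm
    rw [hu m hm]
    rw [Complex.nnnorm_real]
    rw [← enorm_eq_nnnorm, Real.enorm_eq_ofReal (Real.rpow_nonneg (by norm_num) _)]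
    rw [← ENNReal.ofReal_rpow_of_pos (by norm_num)]
    norm_num
  set F : Finset (Fin d → ℤ) :=
    Fintype.piFinset (fun i => Finset.Ico (2^n * k i) (2^n * (k i + 1))) with hF
  have memF : ∀ m, m ∈ F ↔ dyadicCube d (j:ℤ) m ⊆ dyadicCube d jP k := by
    intro m
    rw [cube_subset_iff d (j:ℤ) jP hj m k]
    simp [hF, Fintype.mem_piFinset, Finset.mem_Ico, hn]
  have hsum : (∑' m : Fin d → ℤ,
      if dyadicCube d (j : ℤ) m ⊆ dyadicCube d jP k then (‖u m‖₊ : ℝ≥0∞) ^ pr else 0)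
      = (F.card : ℝ≥0∞) * (2:ℝ≥0∞) ^ (x * pr) := by
    rw [tsum_eq_sum (s := F) (by
      intro m hm
      rw [if_neg (fun hc => hm ((memF m).mpr hc))])]
    have hc : ∀ m ∈ F, (if dyadicCube d (j : ℤ) m ⊆ dyadicCube d jP k
        then (‖u m‖₊ : ℝ≥0∞) ^ pr else 0) = (2:ℝ≥0∞) ^ (x * pr) := by
      intro m hm
      rw [if_pos ((memF m).mp hm), hval m ((memF m).mp hm), ← ENNReal.rpow_mul]
    rw [Finset.sum_congr rfl hc, Finset.sum_const, nsmul_eq_mul]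
  have hcard : F.card = 2 ^ (n * d) := by
    rw [hF, Fintype.card_piFinset]
    have : ∀ i : Fin d, (Finset.Ico (2^n * k i) (2^n * (k i + 1))).card = 2 ^ n := by
      intro i
      rw [Int.card_Ico]
      have : (2:ℤ)^n * (k i + 1) - 2^n * k i = 2^n := by ring
      rw [this, show ((2:ℤ)^n) = ((2^n : ℕ) : ℤ) by push_cast; ring, Int.toNat_natCast]
    rw [Finset.prod_congr rfl (fun i _ => this i), Finset.prod_const, Finset.card_univ, Fintype.card_fin, pow_mul]
  rw [hsum, hcard]
  have hcast : ((2 ^ (n * d) : ℕ) : ℝ≥0∞) = (2:ℝ≥0∞) ^ ((n * d : ℕ) : ℝ) := by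
    rw [ENNReal.rpow_natCast]; push_cast; ring
  rw [hcast, ← ENNReal.rpow_add _ _ (by norm_num) (by norm_num),
    ← ENNReal.rpow_mul, ← ENNReal.rpow_add _ _ (by norm_num) (by norm_num)]
  congr 1
  push_cast
  field_simp
  rw [hn']
  ring

lemma nnval (x : ℝ) : (‖(((2:ℝ) ^ x : ℝ) : ℂ)‖₊ : ℝ≥0∞) = (2:ℝ≥0∞) ^ x := by
  rw [Complex.nnnorm_real, ← enorm_eq_nnnorm, Real.enorm_eq_ofReal (Real.rpow_nonneg (by norm_num) _),
    ← ENNReal.ofReal_rpow_of_pos (by norm_num)]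
  norm_num

/-- The counterexample in the necessity part of Proposition 4.4: the sequence
`λ_{i,j,m} = 2^{-j(s₂+d/2)}` for `i = 1`, `Q_{j,m} ⊆ Q_{0,0} = [0,1)^d` (and `0`
otherwise) satisfies `2^{j(s₂+d/2-d/p₂)} (∑_{m : Q_{j,m} ⊆ P} |λ_{1,j,m}|^{p₂})^{1/p₂}
= 2^{-j_P d/p₂}` for every dyadic `P ⊆ Q_{0,0}` and `j ≥ j_P`; consequently
`‖λ ∣ b̃^{s₂,τ₂}_{p₂,q₂}‖ = ∞` (for `q₂ < ∞`), while
`sup_j 2^{j(s₂+d/2)} sup_{i,m} |λ_{i,j,m}| = 1`. -/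
theorem statement13 (d : ℕ) (hd : 1 ≤ d) (s2 : ℝ) (p2 q2 : ℝ≥0∞)
    (hp2a : 0 < p2) (hp2b : p2 < ∞) (hq2a : 0 < q2) (hq2b : q2 < ∞)
    (τ2 : ℝ) (hτ2a : 0 ≤ τ2) (hτ2b : τ2 ≤ (p2⁻¹).toReal) :
    let lam : Fin (2 ^ d - 1) → ℕ → (Fin d → ℤ) → ℂ := fun i j m =>
      if i.val = 0 ∧ dyadicCube d (j : ℤ) m ⊆ dyadicCube d 0 0 then
        (((2:ℝ) ^ (-(j : ℝ) * (s2 + d / 2)) : ℝ) : ℂ)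
      else 0
    (∀ (jP : ℤ) (k : Fin d → ℤ), dyadicCube d jP k ⊆ dyadicCube d 0 0 →
        ∀ j : ℕ, jP ≤ (j : ℤ) → ∀ i : Fin (2 ^ d - 1), i.val = 0 →
          (2 : ℝ≥0∞) ^ ((j : ℝ) * (s2 + d / 2 - d / p2.toReal)) *
              cubeLpNorm d p2 jP k j (lam i j)
            = (2 : ℝ≥0∞) ^ (-(jP : ℝ) * d / p2.toReal)) ∧
      seqNorm d s2 τ2 p2 q2 0 0 lam = ∞ ∧
      (⨆ (j : ℕ) (i : Fin (2 ^ d - 1)) (m : Fin d → ℤ),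
          (2 : ℝ≥0∞) ^ ((j : ℝ) * (s2 + d / 2)) * (‖lam i j m‖₊ : ℝ≥0∞)) = 1 := by
  intro lam
  have hlam : ∀ i j m, lam i j m =
      (if i.val = 0 ∧ dyadicCube d (j : ℤ) m ⊆ dyadicCube d 0 0 then
        (((2:ℝ) ^ (-(j : ℝ) * (s2 + d / 2)) : ℝ) : ℂ)
      else 0) := fun _ _ _ => rfl
  have hp0 : p2 ≠ 0 := hp2a.ne'
  have hpt : p2 ≠ ∞ := hp2b.ne
  have hq0 : q2 ≠ 0 := hq2a.ne'
  have hqt : q2 ≠ ∞ := hq2b.ne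
  have hqr : 0 < q2.toReal := ENNReal.toReal_pos hq0 hqt
  have hi0 : 0 < 2 ^ d - 1 := by
    have : 2 ≤ 2 ^ d := by
      calc (2:ℕ) = 2 ^ 1 := by norm_num
      _ ≤ 2 ^ d := Nat.pow_le_pow_right (by norm_num) hd
    omega
  set i0 : Fin (2 ^ d - 1) := ⟨0, hi0⟩ with hi0def
  have part1 : ∀ (jP : ℤ) (k : Fin d → ℤ), dyadicCube d jP k ⊆ dyadicCube d 0 0 →
      ∀ j : ℕ, jP ≤ (j : ℤ) → ∀ i : Fin (2 ^ d - 1), i.val = 0 →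
        (2 : ℝ≥0∞) ^ ((j : ℝ) * (s2 + d / 2 - d / p2.toReal)) *
            cubeLpNorm d p2 jP k j (lam i j)
          = (2 : ℝ≥0∞) ^ (-(jP : ℝ) * d / p2.toReal) := by
    intro jP k hP j hj i hi
    rw [cubeLpNorm, if_neg hpt]
    exact key d p2 hp0 hpt s2 jP k j hj (lam i j) (fun m hm => by
      rw [hlam, if_pos ⟨hi, hm.trans hP⟩])
  refine ⟨part1, ?_, ?_⟩
  · -- seqNorm = ∞
    rw [eq_top_iff, seqNorm]
    refine le_trans ?_ (le_iSup _ (0:ℤ))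
    refine le_trans ?_ (le_iSup _ (0 : Fin d → ℤ))
    refine le_trans ?_ (le_iSup _ subset_rfl)
    rw [if_neg hqt]
    have hbig : (∑' j : ℕ,
        if (0:ℤ) ≤ (j:ℤ) then
          ∑ i : Fin (2 ^ d - 1),
            ((2 : ℝ≥0∞) ^ ((j : ℝ) * (s2 + d / 2 - d / p2.toReal)) *
                cubeLpNorm d p2 0 0 j (lam i j)) ^ q2.toReal
        else 0) = ∞ := by
      rw [eq_top_iff]
      refine le_trans ?_ (ENNReal.tsum_le_tsum (f := fun _ : ℕ => (1:ℝ≥0∞)) ?_)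
      · rw [tsum_const_eq_top_of_ne_zero one_ne_zero]
      · intro j
        rw [if_pos (Int.ofNat_nonneg j)]
        refine le_trans ?_ (Finset.single_le_sum (f := fun i : Fin (2^d-1) =>
          ((2 : ℝ≥0∞) ^ ((j : ℝ) * (s2 + d / 2 - d / p2.toReal)) *
            cubeLpNorm d p2 0 0 j (lam i j)) ^ q2.toReal)
          (fun i _ => zero_le) (Finset.mem_univ i0))
        rw [part1 0 0 subset_rfl j (Int.ofNat_nonneg j) i0 rfl]
        rw [show -((0:ℤ):ℝ) * d / p2.toReal = 0 by norm_num, ENNReal.rpow_zero,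
          ENNReal.one_rpow]
    rw [hbig, ENNReal.top_rpow_of_pos (by positivity),
      show (((0:ℤ):ℝ)) * d * τ2 = 0 by norm_num, ENNReal.rpow_zero, one_mul]
  · -- sup = 1
    apply le_antisymm
    · refine iSup_le fun j => iSup_le fun i => iSup_le fun m => ?_
      rw [hlam]
      by_cases hc : i.val = 0 ∧ dyadicCube d (j:ℤ) m ⊆ dyadicCube d 0 0
      · rw [if_pos hc, nnval, ← ENNReal.rpow_add _ _ (by norm_num) (by norm_num),
          show (j:ℝ) * (s2 + d / 2) + (-(j:ℝ) * (s2 + d / 2)) = 0 by ring,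
          ENNReal.rpow_zero]
      · rw [if_neg hc]
        simp
    · refine le_trans ?_ (le_iSup _ (0:ℕ))
      refine le_trans ?_ (le_iSup _ i0)
      refine le_trans ?_ (le_iSup _ (0 : Fin d → ℤ))
      rw [hlam, if_pos ⟨rfl, by rw [Nat.cast_zero]⟩, nnval,
        ← ENNReal.rpow_add _ _ (by norm_num) (by norm_num),
        show ((0:ℕ):ℝ) * (s2 + d / 2) + (-((0:ℕ):ℝ) * (s2 + d / 2)) = 0 by ring,
        ENNReal.rpow_zero]

end
end

section
/- Let $0<p_1<p_2\le\infty$, $0<\tau_1<1/p_1$, and set $\tau_0=(p_1/p_2)\tau_1$. Then $\tau_0<\tau_1$, $\tau_0\le 1/p_2$, and for any $\tau_2<\tau_0$ the chain $\tilde b^{s_1,\tau_1}_{p_1,q_1}\hookrightarrow\tilde b^{s_2,\tau_0}_{p_2,q_2}\hookrightarrow\tilde b^{s_2,\tau_2}_{p_2,q_2}$ holds on sequences supported in a fixed dyadic cube $\tilde Q_0$, provided $q_1\le(p_1/p_2)q_2$ and $\frac{s_1-s_2}{d}=\frac{1}{p_1}-\tau_1-\frac{1}{p_2}+\frac{p_1}{p_2}\tau_1$.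 -/
open MeasureTheory ENNReal

noncomputable section

attribute [local instance] Classical.propDecidable

namespace Statement19Aux

lemma E_add (a b : ℝ) : (2:ℝ≥0∞)^(a+b) = (2:ℝ≥0∞)^a * (2:ℝ≥0∞)^b :=
  ENNReal.rpow_add a b (by norm_num) (by norm_num)

lemma E_pos (a : ℝ) : 0 < (2:ℝ≥0∞)^a :=
  ENNReal.rpow_pos (by norm_num) (by norm_num)

lemma E_ne_top (a : ℝ) : (2:ℝ≥0∞)^a ≠ ∞ := by
  simp [ENNReal.rpow_eq_top_iff]

lemma le_shift (e : ℝ) {x y : ℝ≥0∞} (h : (2:ℝ≥0∞)^e * x ≤ y) :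
    x ≤ (2:ℝ≥0∞)^(-e) * y := by
  have h2 := mul_le_mul_right h ((2:ℝ≥0∞)^(-e))
  rwa [← mul_assoc, ← E_add, neg_add_cancel, ENNReal.rpow_zero, one_mul] at h2

lemma le_lp {ι : Type*} (a : ι → ℝ≥0∞) {q : ℝ} (hq : 0 < q) (i : ι) :
    a i ≤ (∑' j, a j ^ q) ^ (1/q) := by
  have h1 : a i ^ q ≤ ∑' j, a j ^ q := ENNReal.le_tsum i
  calc a i = (a i ^ q) ^ (1/q) := by
        rw [← ENNReal.rpow_mul, mul_one_div_cancel hq.ne', ENNReal.rpow_one]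
    _ ≤ _ := ENNReal.rpow_le_rpow h1 (by positivity)

lemma lp_mono {ι : Type*} (a : ι → ℝ≥0∞) {q r : ℝ} (hq : 0 < q) (hqr : q ≤ r) :
    (∑' i, a i ^ r) ^ (1/r) ≤ (∑' i, a i ^ q) ^ (1/q) := by
  have hr : 0 < r := hq.trans_le hqr
  set S := (∑' i, a i ^ q) ^ (1/q) with hS
  rcases eq_or_ne S ∞ with htop | hStop
  · rw [htop]; exact le_top
  rcases eq_or_ne S 0 with h0 | hS0
  · have hsum : (∑' i, a i ^ q) = 0 := by
      have h := congrArg (fun x : ℝ≥0∞ => x ^ q) h0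
      simp only [hS] at h
      rwa [← ENNReal.rpow_mul, one_div, inv_mul_cancel₀ hq.ne', ENNReal.rpow_one,
        ENNReal.zero_rpow_of_pos hq] at h
    have hai : ∀ i, a i = 0 := by
      intro i
      have h1 : a i ^ q = 0 := le_antisymm (hsum ▸ ENNReal.le_tsum i) zero_le
      exact (ENNReal.rpow_eq_zero_iff_of_pos hq).mp h1
    have : (∑' i, a i ^ r) = 0 := by
      simp [hai, ENNReal.zero_rpow_of_pos hr]
    rw [this, h0, ENNReal.zero_rpow_of_pos (by positivity)]
  · have hterm : ∀ i, a i ^ r ≤ S ^ (r - q) * a i ^ q := by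
      intro i
      have hle : a i ≤ S := le_lp a hq i
      have hsplit : a i ^ r = a i ^ (r - q) * a i ^ q := by
        rw [← ENNReal.rpow_add_of_nonneg _ _ (by linarith) hq.le, sub_add_cancel]
      rw [hsplit]
      exact mul_le_mul_left (ENNReal.rpow_le_rpow hle (by linarith)) _
    have hSq : (∑' i, a i ^ q) = S ^ q := by
      rw [hS, ← ENNReal.rpow_mul, one_div, inv_mul_cancel₀ hq.ne', ENNReal.rpow_one]
    have hsum3 : (∑' i, a i ^ r) ≤ S ^ r := by
      calc (∑' i, a i ^ r) ≤ ∑' i, S ^ (r - q) * a i ^ q := ENNReal.tsum_le_tsum hterm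
        _ = S ^ (r - q) * ∑' i, a i ^ q := ENNReal.tsum_mul_left
        _ = S ^ (r - q) * S ^ q := by rw [hSq]
        _ = S ^ r := by
            rw [← ENNReal.rpow_add _ _ hS0 hStop, sub_add_cancel]
    calc (∑' i, a i ^ r) ^ (1/r) ≤ (S ^ r) ^ (1/r) :=
          ENNReal.rpow_le_rpow hsum3 (by positivity)
      _ = S := by rw [← ENNReal.rpow_mul, mul_one_div_cancel hr.ne', ENNReal.rpow_one]

lemma self_le_cubeLpNorm {d : ℕ} {p : ℝ≥0∞} {jP : ℤ} {k : Fin d → ℤ} {j : ℕ}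
    {u : (Fin d → ℤ) → ℂ} {m0 : Fin d → ℤ} (hp : p ≠ ∞) (hpp : 0 < p.toReal)
    (hm : dyadicCube d (j:ℤ) m0 ⊆ dyadicCube d jP k) :
    (‖u m0‖₊ : ℝ≥0∞) ≤ cubeLpNorm d p jP k j u := by
  rw [cubeLpNorm, if_neg hp]
  have h1 : (‖u m0‖₊ : ℝ≥0∞) ^ p.toReal ≤
      ∑' m : Fin d → ℤ, (if dyadicCube d (j:ℤ) m ⊆ dyadicCube d jP k then
        (‖u m‖₊ : ℝ≥0∞) ^ p.toReal else 0) := by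
    have h2 := ENNReal.le_tsum (f := fun m : Fin d → ℤ =>
      if dyadicCube d (j:ℤ) m ⊆ dyadicCube d jP k then (‖u m‖₊ : ℝ≥0∞) ^ p.toReal else 0) m0
    rwa [if_pos hm] at h2
  calc (‖u m0‖₊ : ℝ≥0∞) = ((‖u m0‖₊ : ℝ≥0∞) ^ p.toReal) ^ (1/p.toReal) := by
        rw [← ENNReal.rpow_mul, mul_one_div_cancel hpp.ne', ENNReal.rpow_one]
    _ ≤ _ := ENNReal.rpow_le_rpow h1 (by positivity)

lemma le_seqNorm (d : ℕ) (s τ : ℝ) (p q : ℝ≥0∞) (J0 : ℤ) (K0 : Fin d → ℤ)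
    (t : Fin (2 ^ d - 1) → ℕ → (Fin d → ℤ) → ℂ) {jP : ℤ} {k : Fin d → ℤ}
    (hsub : dyadicCube d jP k ⊆ dyadicCube d J0 K0) :
    (2 : ℝ≥0∞) ^ ((jP : ℝ) * d * τ) *
      (if q = ∞ then
        ⨆ (j : ℕ) (_ : jP ≤ (j : ℤ)) (i : Fin (2 ^ d - 1)),
          (2 : ℝ≥0∞) ^ ((j : ℝ) * (s + d / 2 - d / p.toReal)) * cubeLpNorm d p jP k j (t i j)
      else
        (∑' j : ℕ,
            if jP ≤ (j : ℤ) then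
              ∑ i : Fin (2 ^ d - 1),
                ((2 : ℝ≥0∞) ^ ((j : ℝ) * (s + d / 2 - d / p.toReal)) *
                    cubeLpNorm d p jP k j (t i j)) ^ q.toReal
            else 0) ^ (1 / q.toReal)) ≤ seqNorm d s τ p q J0 K0 t :=
  le_iSup_of_le jP (le_iSup_of_le k (le_iSup_of_le hsub le_rfl))

lemma seqNorm_le (d : ℕ) (s τ : ℝ) (p q : ℝ≥0∞) (J0 : ℤ) (K0 : Fin d → ℤ)
    (t : Fin (2 ^ d - 1) → ℕ → (Fin d → ℤ) → ℂ) {X : ℝ≥0∞}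
    (h : ∀ (jP : ℤ) (k : Fin d → ℤ), dyadicCube d jP k ⊆ dyadicCube d J0 K0 →
      (2 : ℝ≥0∞) ^ ((jP : ℝ) * d * τ) *
      (if q = ∞ then
        ⨆ (j : ℕ) (_ : jP ≤ (j : ℤ)) (i : Fin (2 ^ d - 1)),
          (2 : ℝ≥0∞) ^ ((j : ℝ) * (s + d / 2 - d / p.toReal)) * cubeLpNorm d p jP k j (t i j)
      else
        (∑' j : ℕ,
            if jP ≤ (j : ℤ) then
              ∑ i : Fin (2 ^ d - 1),
                ((2 : ℝ≥0∞) ^ ((j : ℝ) * (s + d / 2 - d / p.toReal)) *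
                    cubeLpNorm d p jP k j (t i j)) ^ q.toReal
            else 0) ^ (1 / q.toReal)) ≤ X) :
    seqNorm d s τ p q J0 K0 t ≤ X :=
  iSup_le fun jP => iSup_le fun k => iSup_le fun hsub => h jP k hsub

lemma term_le_seqNorm {d : ℕ} {s τ : ℝ} {p q : ℝ≥0∞} {J0 : ℤ} {K0 : Fin d → ℤ}
    {t : Fin (2 ^ d - 1) → ℕ → (Fin d → ℤ) → ℂ} (hq0 : 0 < q)
    {jP : ℤ} {k : Fin d → ℤ} (hsub : dyadicCube d jP k ⊆ dyadicCube d J0 K0)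
    {j : ℕ} (hj : jP ≤ (j : ℤ)) (i : Fin (2 ^ d - 1)) :
    (2 : ℝ≥0∞) ^ ((jP : ℝ) * d * τ) *
      ((2 : ℝ≥0∞) ^ ((j : ℝ) * (s + d / 2 - d / p.toReal)) * cubeLpNorm d p jP k j (t i j)) ≤
    seqNorm d s τ p q J0 K0 t := by
  refine le_trans (mul_le_mul_right ?_ _) (le_seqNorm d s τ p q J0 K0 t hsub)
  by_cases hq : q = ∞
  · rw [if_pos hq]
    exact le_iSup_of_le j (le_iSup_of_le hj (le_iSup_of_le i le_rfl))
  · rw [if_neg hq]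
    have hQ : 0 < q.toReal := ENNReal.toReal_pos hq0.ne' hq
    set x := (2 : ℝ≥0∞) ^ ((j : ℝ) * (s + d / 2 - d / p.toReal)) * cubeLpNorm d p jP k j (t i j)
      with hx
    have h1 : x ^ q.toReal ≤ ∑' j' : ℕ,
        if jP ≤ (j' : ℤ) then
          ∑ i' : Fin (2 ^ d - 1),
            ((2 : ℝ≥0∞) ^ ((j' : ℝ) * (s + d / 2 - d / p.toReal)) *
                cubeLpNorm d p jP k j' (t i' j')) ^ q.toReal
        else 0 := by
      refine le_trans ?_ (ENNReal.le_tsum j)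
      rw [if_pos hj]
      exact Finset.single_le_sum (f := fun i' : Fin (2^d-1) =>
        ((2 : ℝ≥0∞) ^ ((j : ℝ) * (s + d / 2 - d / p.toReal)) *
          cubeLpNorm d p jP k j (t i' j)) ^ q.toReal) (fun _ _ => zero_le) (Finset.mem_univ i)
    calc x = (x ^ q.toReal) ^ (1/q.toReal) := by
          rw [← ENNReal.rpow_mul, mul_one_div_cancel hQ.ne', ENNReal.rpow_one]
      _ ≤ _ := ENNReal.rpow_le_rpow h1 (by positivity)

lemma final_combine (A θ τ1 : ℝ) (hθ0 : 0 ≤ θ) (hθ1 : θ ≤ 1) {N1 X : ℝ≥0∞}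
    (hX : X ≤ N1 ^ (1-θ) * ((2:ℝ≥0∞) ^ (-(A*τ1)) * N1) ^ θ) :
    (2:ℝ≥0∞) ^ (A*(θ*τ1)) * X ≤ N1 := by
  refine le_trans (mul_le_mul_right hX _) ?_
  rw [ENNReal.mul_rpow_of_nonneg _ _ hθ0, ← ENNReal.rpow_mul]
  apply le_of_eq
  calc (2:ℝ≥0∞)^(A*(θ*τ1)) * (N1^(1-θ) * ((2:ℝ≥0∞)^(-(A*τ1)*θ) * N1^θ))
      = ((2:ℝ≥0∞)^(A*(θ*τ1)) * (2:ℝ≥0∞)^(-(A*τ1)*θ)) * (N1^(1-θ) * N1^θ) := by ring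
    _ = N1 := by
        rw [← E_add, ← ENNReal.rpow_add_of_nonneg _ _ (by linarith) hθ0,
          show A*(θ*τ1) + -(A*τ1)*θ = 0 from by ring,
          show (1-θ)+θ = 1 from by ring, ENNReal.rpow_zero, one_mul, ENNReal.rpow_one]

lemma level_le {d : ℕ} (hd : 1 ≤ d) {j1 j2 : ℤ} {k1 k2 : Fin d → ℤ}
    (h : dyadicCube d j1 k1 ⊆ dyadicCube d j2 k2) : j2 ≤ j1 := by
  by_contra hlt
  push_neg at hlt
  set i0 : Fin d := ⟨0, hd⟩
  have hr1 : (0:ℝ) < (2:ℝ)^(-j1) := zpow_pos (by norm_num) _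
  have hr2 : (0:ℝ) < (2:ℝ)^(-j2) := zpow_pos (by norm_num) _
  have hs1 : (0:ℝ) < (2:ℝ)^(j1) := zpow_pos (by norm_num) _
  have hrs : (2:ℝ)^(-j1) * (2:ℝ)^(j1) = 1 := by
    rw [← zpow_add₀ (by norm_num : (2:ℝ) ≠ 0), neg_add_cancel, zpow_zero]
  have hmem : ∀ ε : ℝ, 0 ≤ ε → ε < 1 →
      (fun i => (2:ℝ)^(-j1) * (k1 i + ε)) ∈ dyadicCube d j1 k1 := by
    intro ε h0 h1 i
    constructor
    · show (2:ℝ)^(-j1) * (k1 i) ≤ (2:ℝ)^(-j1) * ((k1 i : ℝ) + ε)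
      nlinarith
    · show (2:ℝ)^(-j1) * ((k1 i : ℝ) + ε) < (2:ℝ)^(-j1) * ((k1 i : ℝ) + 1)
      nlinarith
  have hc : ∀ ε : ℝ, 0 ≤ ε → ε < 1 →
      (2:ℝ)^(-j1) * (k1 i0 + ε) < (2:ℝ)^(-j2) * (k2 i0 + 1) := by
    intro ε h0 h1
    exact (h (hmem ε h0 h1) i0).2
  have hA : (2:ℝ)^(-j2) * (k2 i0) ≤ (2:ℝ)^(-j1) * (k1 i0) := by
    have h2 := (h (hmem 0 le_rfl one_pos) i0).1
    simpa using h2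
  have hscale : 2 * (2:ℝ)^(-j2) ≤ (2:ℝ)^(-j1) := by
    have h3 : (2:ℝ)^(-j2+1) ≤ (2:ℝ)^(-j1) :=
      zpow_le_zpow_right₀ (by norm_num) (by omega)
    rw [zpow_add₀ (by norm_num : (2:ℝ) ≠ 0), zpow_one, mul_comm] at h3
    exact h3
  set c := (2:ℝ)^(-j1) * (k1 i0) with hcdef
  set B := (2:ℝ)^(-j2) * ((k2 i0 : ℝ) + 1) with hBdef
  have hcB : c < B := by
    have h4 := hc 0 le_rfl one_pos
    simpa [hcdef, hBdef] using h4
  have hBc : B - c ≤ (2:ℝ)^(-j2) := by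
    have : B = (2:ℝ)^(-j2) * (k2 i0) + (2:ℝ)^(-j2) := by rw [hBdef]; ring
    nlinarith
  set ε0 := (B - c) * (2:ℝ)^(j1) with hε0def
  have hε0pos : 0 < ε0 := mul_pos (by linarith) hs1
  have hε0lt : ε0 ≤ 1/2 := by
    have h5 : ε0 ≤ (2:ℝ)^(-j2) * (2:ℝ)^(j1) :=
      mul_le_mul_of_nonneg_right hBc hs1.le
    nlinarith
  have hε1 : (ε0 + 1)/2 < 1 := by linarith
  have hε2 : 0 ≤ (ε0 + 1)/2 := by linarith
  have h6 := hc ((ε0+1)/2) hε2 hε1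
  have h7 : (2:ℝ)^(-j1) * ((ε0+1)/2) > B - c := by
    have h8 : (2:ℝ)^(-j1) * ε0 = B - c := by
      rw [hε0def]
      calc (2:ℝ)^(-j1) * ((B - c) * (2:ℝ)^(j1))
          = (B - c) * ((2:ℝ)^(-j1) * (2:ℝ)^(j1)) := by ring
        _ = B - c := by rw [hrs]; ring
    nlinarith
  have h9 : (2:ℝ)^(-j1) * ((k1 i0 : ℝ) + (ε0+1)/2) = c + (2:ℝ)^(-j1) * ((ε0+1)/2) := by
    rw [hcdef]; ring
  rw [h9] at h6
  linarith

lemma combineC {u v w : ℝ} (hw : u + v = w) (N L : ℝ≥0∞) (α β : ℝ) :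
    (2:ℝ≥0∞)^u * (((2:ℝ≥0∞)^v * N^α) * L^β) = N^α * ((2:ℝ≥0∞)^w * L^β) := by
  rw [← hw, E_add]; ring

end Statement19Aux

open Statement19Aux

/-- Substep 1.4 of the limiting embedding theorem: for `0 < p₁ < p₂ ≤ ∞`,
`0 < τ₁ < 1/p₁` and `τ₀ = (p₁/p₂)τ₁`, one has `τ₀ < τ₁`, `τ₀ ≤ 1/p₂`, and for any
`0 ≤ τ₂ < τ₀`, provided `q₁ ≤ (p₁/p₂)q₂` and
`(s₁-s₂)/d = 1/p₁ - τ₁ - 1/p₂ + (p₁/p₂)τ₁`, the chain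
`b̃^{s₁,τ₁}_{p₁,q₁} ↪ b̃^{s₂,τ₀}_{p₂,q₂} ↪ b̃^{s₂,τ₂}_{p₂,q₂}` holds on sequences
supported in a fixed dyadic cube `Q̃₀`. -/
theorem statement19 (d : ℕ) (hd : 1 ≤ d) (p1 p2 : ℝ≥0∞) (hp1 : 0 < p1) (hp12 : p1 < p2)
    (τ1 : ℝ) (hτ1 : 0 < τ1) (hτ1' : τ1 < (p1⁻¹).toReal) (J0 : ℤ) (K0 : Fin d → ℤ) :
    (p1 / p2).toReal * τ1 < τ1 ∧ (p1 / p2).toReal * τ1 ≤ (p2⁻¹).toReal ∧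
    ∀ τ2 : ℝ, 0 ≤ τ2 → τ2 < (p1 / p2).toReal * τ1 →
      ∀ q1 q2 : ℝ≥0∞, 0 < q1 → q1 ≤ (p1 / p2) * q2 →
        ∀ s1 s2 : ℝ,
          (s1 - s2) / d = (p1⁻¹).toReal - τ1 - (p2⁻¹).toReal + (p1 / p2).toReal * τ1 →
          ∃ C1 C2 : ℝ≥0∞, 0 < C1 ∧ C1 < ∞ ∧ 0 < C2 ∧ C2 < ∞ ∧
            ∀ t : Fin (2 ^ d - 1) → ℕ → (Fin d → ℤ) → ℂ, SupportedIn d J0 K0 t →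
              seqNorm d s2 ((p1 / p2).toReal * τ1) p2 q2 J0 K0 t ≤
                  C1 * seqNorm d s1 τ1 p1 q1 J0 K0 t ∧
                seqNorm d s2 τ2 p2 q2 J0 K0 t ≤
                  C2 * seqNorm d s2 ((p1 / p2).toReal * τ1) p2 q2 J0 K0 t := by
  rcases eq_or_ne p2 ∞ with hp2top | hp2top
  · subst hp2top
    refine ⟨?_, ?_, ?_⟩
    · simpa [ENNReal.div_top] using hτ1
    · simp [ENNReal.div_top]
    · intro τ2 hτ20 hτ2
      rw [ENNReal.div_top] at hτ2
      simp only [ENNReal.toReal_zero, zero_mul] at hτ2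
      exact absurd (hτ20.trans_lt hτ2) (lt_irrefl 0)
  have hp1top : p1 ≠ ∞ := ne_top_of_lt hp12
  have hp20 : p2 ≠ 0 := (hp1.trans hp12).ne'
  have hP1 : 0 < p1.toReal := ENNReal.toReal_pos hp1.ne' hp1top
  have hP2 : 0 < p2.toReal := ENNReal.toReal_pos hp20 hp2top
  have hP12 : p1.toReal < p2.toReal := ENNReal.toReal_strict_mono hp2top hp12
  have hθP : (p1/p2).toReal = p1.toReal / p2.toReal := ENNReal.toReal_div _ _
  have hθ0 : 0 < (p1/p2).toReal := by rw [hθP]; positivity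
  have hθ1 : (p1/p2).toReal < 1 := by rw [hθP]; exact (div_lt_one hP2).mpr hP12
  have hfin : p1/p2 ≠ ∞ := by
    rw [Ne, ENNReal.div_eq_top]
    push_neg
    exact ⟨fun _ => hp20, fun h => absurd h hp1top⟩
  refine ⟨?_, ?_, ?_⟩
  · nlinarith
  · rw [ENNReal.toReal_inv, hθP]
    rw [ENNReal.toReal_inv] at hτ1'
    have h1 : p1.toReal / p2.toReal * τ1 ≤ p1.toReal / p2.toReal * p1.toReal⁻¹ :=
      mul_le_mul_of_nonneg_left hτ1'.le (by positivity)
    have h2 : p1.toReal / p2.toReal * p1.toReal⁻¹ = p2.toReal⁻¹ := by field_simp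
    linarith
  intro τ2 hτ20 hτ2 q1 q2 hq1 hq12 s1 s2 hs
  have hq20 : q2 ≠ 0 := by
    rintro rfl
    rw [mul_zero] at hq12
    exact absurd (le_antisymm hq12 zero_le) hq1.ne'
  have hexp : s2 + (d:ℝ)/2 - (d:ℝ)/p2.toReal
      = (s1 + (d:ℝ)/2 - (d:ℝ)/p1.toReal) + (d:ℝ)*τ1*(1-(p1/p2).toReal) := by
    have hd' : (0:ℝ) < d := by exact_mod_cast hd
    rw [ENNReal.toReal_inv, ENNReal.toReal_inv] at hs
    rw [div_eq_iff hd'.ne'] at hs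
    rw [hθP] at hs ⊢
    linear_combination -hs
  refine ⟨1, (2:ℝ≥0∞)^((J0:ℝ)*d*(τ2-(p1/p2).toReal*τ1)), one_pos, ENNReal.one_lt_top,
    E_pos _, lt_top_iff_ne_top.mpr (E_ne_top _), fun t hsupp => ⟨?_, ?_⟩⟩
  · -- first embedding
    rw [one_mul]
    set N1 := seqNorm d s1 τ1 p1 q1 J0 K0 t with hN1
    refine seqNorm_le d s2 ((p1/p2).toReal*τ1) p2 q2 J0 K0 t fun jP k hsub => ?_
    have hcore : ∀ (j : ℕ) (i : Fin (2^d-1)),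
        (2:ℝ≥0∞)^((j:ℝ)*(s2 + (d:ℝ)/2 - (d:ℝ)/p2.toReal)) * cubeLpNorm d p2 jP k j (t i j) ≤
        N1^(1-(p1/p2).toReal) *
          ((2:ℝ≥0∞)^((j:ℝ)*(s1 + (d:ℝ)/2 - (d:ℝ)/p1.toReal)) *
            cubeLpNorm d p1 jP k j (t i j))^((p1/p2).toReal) := by
      intro j i
      have hpt : ∀ m, dyadicCube d (j:ℤ) m ⊆ dyadicCube d jP k →
          (‖t i j m‖₊ : ℝ≥0∞) ≤
            (2:ℝ≥0∞)^(-((j:ℝ)*(d:ℝ)*τ1 + (j:ℝ)*(s1 + (d:ℝ)/2 - (d:ℝ)/p1.toReal))) * N1 := by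
        intro m hm
        apply le_shift
        have h1 : (‖t i j m‖₊:ℝ≥0∞) ≤ cubeLpNorm d p1 (j:ℤ) m j (t i j) :=
          self_le_cubeLpNorm hp1top hP1 (subset_refl _)
        have h2 := term_le_seqNorm (t := t) (s := s1) (τ := τ1) (p := p1) (q := q1)
          (J0 := J0) (K0 := K0) hq1 (hm.trans hsub) (le_refl (j:ℤ)) i
        rw [← hN1] at h2
        push_cast at h2
        refine le_trans ?_ h2
        rw [E_add, mul_assoc]
        exact mul_le_mul_right (mul_le_mul_right h1 _) _
      have hLp : cubeLpNorm d p2 jP k j (t i j) ≤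
          ((2:ℝ≥0∞)^(-((j:ℝ)*(d:ℝ)*τ1 + (j:ℝ)*(s1 + (d:ℝ)/2 - (d:ℝ)/p1.toReal))) *
            N1)^(1-(p1/p2).toReal) *
          (cubeLpNorm d p1 jP k j (t i j))^((p1/p2).toReal) := by
        set B := (2:ℝ≥0∞)^(-((j:ℝ)*(d:ℝ)*τ1 + (j:ℝ)*(s1 + (d:ℝ)/2 - (d:ℝ)/p1.toReal))) * N1
          with hB
        rw [cubeLpNorm, cubeLpNorm, if_neg hp1top, if_neg hp2top]
        set S1 := ∑' m : Fin d → ℤ, (if dyadicCube d (j:ℤ) m ⊆ dyadicCube d jP k then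
          (‖t i j m‖₊:ℝ≥0∞)^p1.toReal else 0) with hS1
        have hsum : (∑' m : Fin d → ℤ, if dyadicCube d (j:ℤ) m ⊆ dyadicCube d jP k then
              (‖t i j m‖₊:ℝ≥0∞)^p2.toReal else 0)
            ≤ B^(p2.toReal - p1.toReal) * S1 := by
          rw [hS1, ← ENNReal.tsum_mul_left]
          refine ENNReal.tsum_le_tsum fun m => ?_
          by_cases hm : dyadicCube d (j:ℤ) m ⊆ dyadicCube d jP k
          · rw [if_pos hm, if_pos hm]
            have hsplit : (‖t i j m‖₊:ℝ≥0∞)^p2.toReal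
                = (‖t i j m‖₊:ℝ≥0∞)^(p2.toReal - p1.toReal) * (‖t i j m‖₊:ℝ≥0∞)^p1.toReal := by
              rw [← ENNReal.rpow_add_of_nonneg _ _ (by linarith) hP1.le, sub_add_cancel]
            rw [hsplit]
            exact mul_le_mul_left (ENNReal.rpow_le_rpow (hpt m hm) (by linarith)) _
          · simp [hm]
        have he1 : (p2.toReal - p1.toReal) * (1/p2.toReal) = 1 - (p1/p2).toReal := by
          rw [hθP]; field_simp
        have he2 : (1:ℝ)/p2.toReal = (1/p1.toReal) * (p1/p2).toReal := by
          rw [hθP]; field_simp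
        calc (∑' m : Fin d → ℤ, if dyadicCube d (j:ℤ) m ⊆ dyadicCube d jP k then
              (‖t i j m‖₊:ℝ≥0∞)^p2.toReal else 0)^(1/p2.toReal)
            ≤ (B^(p2.toReal - p1.toReal) * S1)^(1/p2.toReal) :=
              ENNReal.rpow_le_rpow hsum (by positivity)
          _ = (B^(p2.toReal - p1.toReal))^(1/p2.toReal) * S1^(1/p2.toReal) :=
              ENNReal.mul_rpow_of_nonneg _ _ (by positivity)
          _ = B^(1-(p1/p2).toReal) * (S1^(1/p1.toReal))^((p1/p2).toReal) := by
              rw [← ENNReal.rpow_mul, he1, he2, ENNReal.rpow_mul]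
      refine le_trans (mul_le_mul_right hLp _) ?_
      apply le_of_eq
      rw [ENNReal.mul_rpow_of_nonneg _ _ (by linarith : (0:ℝ) ≤ 1-(p1/p2).toReal),
          ENNReal.mul_rpow_of_nonneg _ _ hθ0.le,
          ← ENNReal.rpow_mul, ← ENNReal.rpow_mul]
      exact combineC (by linear_combination (j:ℝ)*hexp) _ _ _ _
    by_cases hq2 : q2 = ∞
    · rw [if_pos hq2]
      refine final_combine ((jP:ℝ)*(d:ℝ)) ((p1/p2).toReal) τ1 hθ0.le hθ1.le ?_
      refine iSup_le fun j => iSup_le fun hj => iSup_le fun i => ?_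
      refine le_trans (hcore j i) (mul_le_mul_right (ENNReal.rpow_le_rpow ?_ hθ0.le) _)
      apply le_shift
      have h3 := term_le_seqNorm (t := t) (s := s1) (τ := τ1) (p := p1) (q := q1)
        (J0 := J0) (K0 := K0) hq1 hsub hj i
      rw [← hN1] at h3
      exact h3
    · rw [if_neg hq2]
      have hq1top : q1 ≠ ∞ := by
        intro h
        rw [h, top_le_iff] at hq12
        exact ENNReal.mul_ne_top hfin hq2 hq12
      have hQ1 : 0 < q1.toReal := ENNReal.toReal_pos hq1.ne' hq1top
      have hQ2 : 0 < q2.toReal := ENNReal.toReal_pos hq20 hq2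
      have hQQ : q1.toReal ≤ (p1/p2).toReal * q2.toReal := by
        have h1 := ENNReal.toReal_mono (ENNReal.mul_ne_top hfin hq2) hq12
        rwa [ENNReal.toReal_mul] at h1
      refine final_combine ((jP:ℝ)*(d:ℝ)) ((p1/p2).toReal) τ1 hθ0.le hθ1.le ?_
      have hB1 : (∑' j : ℕ, if jP ≤ (j:ℤ) then ∑ i : Fin (2^d-1),
            ((2:ℝ≥0∞)^((j:ℝ)*(s1 + (d:ℝ)/2 - (d:ℝ)/p1.toReal)) *
              cubeLpNorm d p1 jP k j (t i j))^q1.toReal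
          else 0)^(1/q1.toReal) ≤ (2:ℝ≥0∞)^(-((jP:ℝ)*(d:ℝ)*τ1)) * N1 := by
        apply le_shift
        refine le_trans ?_ (le_seqNorm d s1 τ1 p1 q1 J0 K0 t hsub)
        rw [if_neg hq1top]
      have step1 : (∑' j : ℕ, if jP ≤ (j:ℤ) then ∑ i : Fin (2^d-1),
            ((2:ℝ≥0∞)^((j:ℝ)*(s2 + (d:ℝ)/2 - (d:ℝ)/p2.toReal)) *
              cubeLpNorm d p2 jP k j (t i j))^q2.toReal
          else 0)
          ≤ (N1^(1-(p1/p2).toReal))^q2.toReal * ∑' j : ℕ, (if jP ≤ (j:ℤ) then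
            ∑ i : Fin (2^d-1),
              ((2:ℝ≥0∞)^((j:ℝ)*(s1 + (d:ℝ)/2 - (d:ℝ)/p1.toReal)) *
                cubeLpNorm d p1 jP k j (t i j))^((p1/p2).toReal*q2.toReal)
          else 0) := by
        rw [← ENNReal.tsum_mul_left]
        refine ENNReal.tsum_le_tsum fun j => ?_
        by_cases hj : jP ≤ (j:ℤ)
        · rw [if_pos hj, if_pos hj, Finset.mul_sum]
          refine Finset.sum_le_sum fun i _ => ?_
          calc ((2:ℝ≥0∞)^((j:ℝ)*(s2 + (d:ℝ)/2 - (d:ℝ)/p2.toReal)) *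
                cubeLpNorm d p2 jP k j (t i j))^q2.toReal
              ≤ (N1^(1-(p1/p2).toReal) *
                  ((2:ℝ≥0∞)^((j:ℝ)*(s1 + (d:ℝ)/2 - (d:ℝ)/p1.toReal)) *
                    cubeLpNorm d p1 jP k j (t i j))^((p1/p2).toReal))^q2.toReal :=
                ENNReal.rpow_le_rpow (hcore j i) hQ2.le
            _ = (N1^(1-(p1/p2).toReal))^q2.toReal *
                ((2:ℝ≥0∞)^((j:ℝ)*(s1 + (d:ℝ)/2 - (d:ℝ)/p1.toReal)) *
                  cubeLpNorm d p1 jP k j (t i j))^((p1/p2).toReal*q2.toReal) := by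
                rw [ENNReal.mul_rpow_of_nonneg _ _ hQ2.le, ← ENNReal.rpow_mul, ← ENNReal.rpow_mul]
        · rw [if_neg hj, if_neg hj, mul_zero]
      have hconv : ∀ r : ℝ, 0 < r → (∑' j : ℕ, if jP ≤ (j:ℤ) then
            ∑ i : Fin (2^d-1),
              ((2:ℝ≥0∞)^((j:ℝ)*(s1 + (d:ℝ)/2 - (d:ℝ)/p1.toReal)) *
                cubeLpNorm d p1 jP k j (t i j))^r
          else 0)
          = ∑' x : ℕ × Fin (2^d-1), (if jP ≤ (x.1:ℤ) then
              (2:ℝ≥0∞)^((x.1:ℝ)*(s1 + (d:ℝ)/2 - (d:ℝ)/p1.toReal)) *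
                cubeLpNorm d p1 jP k x.1 (t x.2 x.1)
            else 0)^r := by
        intro r hr
        rw [ENNReal.tsum_prod']
        refine tsum_congr fun j => ?_
        by_cases hj : jP ≤ (j:ℤ)
        · rw [if_pos hj, tsum_fintype]
          exact Finset.sum_congr rfl fun i _ => by rw [if_pos hj]
        · rw [if_neg hj]
          simp [hj, ENNReal.zero_rpow_of_pos hr]
      have hlp : (∑' j : ℕ, if jP ≤ (j:ℤ) then
            ∑ i : Fin (2^d-1),
              ((2:ℝ≥0∞)^((j:ℝ)*(s1 + (d:ℝ)/2 - (d:ℝ)/p1.toReal)) *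
                cubeLpNorm d p1 jP k j (t i j))^((p1/p2).toReal*q2.toReal)
          else 0)^(1/((p1/p2).toReal*q2.toReal))
          ≤ (∑' j : ℕ, if jP ≤ (j:ℤ) then
            ∑ i : Fin (2^d-1),
              ((2:ℝ≥0∞)^((j:ℝ)*(s1 + (d:ℝ)/2 - (d:ℝ)/p1.toReal)) *
                cubeLpNorm d p1 jP k j (t i j))^q1.toReal
          else 0)^(1/q1.toReal) := by
        rw [hconv _ (by positivity), hconv _ hQ1]
        exact lp_mono _ hQ1 hQQ
      calc (∑' j : ℕ, if jP ≤ (j:ℤ) then ∑ i : Fin (2^d-1),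
            ((2:ℝ≥0∞)^((j:ℝ)*(s2 + (d:ℝ)/2 - (d:ℝ)/p2.toReal)) *
              cubeLpNorm d p2 jP k j (t i j))^q2.toReal
          else 0)^(1/q2.toReal)
          ≤ ((N1^(1-(p1/p2).toReal))^q2.toReal * ∑' j : ℕ, (if jP ≤ (j:ℤ) then
              ∑ i : Fin (2^d-1),
                ((2:ℝ≥0∞)^((j:ℝ)*(s1 + (d:ℝ)/2 - (d:ℝ)/p1.toReal)) *
                  cubeLpNorm d p1 jP k j (t i j))^((p1/p2).toReal*q2.toReal)
            else 0))^(1/q2.toReal) :=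
            ENNReal.rpow_le_rpow step1 (by positivity)
        _ = N1^(1-(p1/p2).toReal) * (∑' j : ℕ, if jP ≤ (j:ℤ) then
              ∑ i : Fin (2^d-1),
                ((2:ℝ≥0∞)^((j:ℝ)*(s1 + (d:ℝ)/2 - (d:ℝ)/p1.toReal)) *
                  cubeLpNorm d p1 jP k j (t i j))^((p1/p2).toReal*q2.toReal)
            else 0)^(1/q2.toReal) := by
            rw [ENNReal.mul_rpow_of_nonneg _ _ (by positivity),
              ← ENNReal.rpow_mul (N1^(1-(p1/p2).toReal)) q2.toReal (1/q2.toReal),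
              mul_one_div_cancel hQ2.ne', ENNReal.rpow_one]
        _ ≤ N1^(1-(p1/p2).toReal) * ((2:ℝ≥0∞)^(-((jP:ℝ)*(d:ℝ)*τ1)) * N1)^((p1/p2).toReal) := by
            refine mul_le_mul_right ?_ _
            have hre : 1/((p1/p2).toReal*q2.toReal)*(p1/p2).toReal = 1/q2.toReal := by
              field_simp
            have h2 : (∑' j : ℕ, if jP ≤ (j:ℤ) then
                  ∑ i : Fin (2^d-1),
                    ((2:ℝ≥0∞)^((j:ℝ)*(s1 + (d:ℝ)/2 - (d:ℝ)/p1.toReal)) *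
                      cubeLpNorm d p1 jP k j (t i j))^((p1/p2).toReal*q2.toReal)
                else 0)^(1/q2.toReal)
                = ((∑' j : ℕ, if jP ≤ (j:ℤ) then
                  ∑ i : Fin (2^d-1),
                    ((2:ℝ≥0∞)^((j:ℝ)*(s1 + (d:ℝ)/2 - (d:ℝ)/p1.toReal)) *
                      cubeLpNorm d p1 jP k j (t i j))^((p1/p2).toReal*q2.toReal)
                else 0)^(1/((p1/p2).toReal*q2.toReal)))^((p1/p2).toReal) := by
              rw [← ENNReal.rpow_mul, hre]
            rw [h2]
            exact ENNReal.rpow_le_rpow (hlp.trans hB1) hθ0.le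
  · -- second embedding
    refine seqNorm_le d s2 τ2 p2 q2 J0 K0 t fun jP k hsub => ?_
    have hJ0 : (J0:ℝ) ≤ (jP:ℝ) := by exact_mod_cast level_le hd hsub
    refine le_trans ?_
      (mul_le_mul_right (le_seqNorm d s2 ((p1/p2).toReal*τ1) p2 q2 J0 K0 t hsub) _)
    rw [← mul_assoc]
    refine mul_le_mul_left ?_ _
    rw [← E_add]
    refine ENNReal.rpow_le_rpow_of_exponent_le (by norm_num) ?_
    have hd0 : (0:ℝ) ≤ d := Nat.cast_nonneg d
    nlinarith [mul_nonneg (mul_nonneg (sub_nonneg.mpr hJ0) hd0) (sub_nonneg.mpr hτ2.le)]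

end
end
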